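/- arXiv:0906.2249 — 6 statements merged into one kernel-verified Lean document; each statement's English description precedes it below -/
import Mathlib

section
/- Let γ be a closed convex curve in ℝ² (the boundary of a compact convex body) such that γ meets every line in at most two points. Then for any nonzero vector p, the intersection of γ with its translate γ + p contains at most two points. -/
private lemma aux_le (K : Set (ℝ × ℝ)) (hK : IsCompact K) (γ : Set (ℝ × ℝ)) (hγ : γ = frontier K)
    (hline : ∀ a v : ℝ × ℝ, v ≠ 0 →
      ∀ x ∈ γ ∩ {q | ∃ t : ℝ, q = a + t • v}, ∀ y ∈ γ ∩ {q | ∃ t : ℝ, q = a + t • v},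
      ∀ z ∈ γ ∩ {q | ∃ t : ℝ, q = a + t • v}, x = y ∨ x = z ∨ y = z)
    (p : ℝ × ℝ) (hp : p ≠ 0) (w : ℝ × ℝ) (hw : w ∈ γ) (hw' : w - p ∈ γ)
    (t : ℝ) (ht : w + t • p ∈ K) : t ≤ 0 := by
  have hKc : IsClosed K := hK.isClosed
  have hγK : γ ⊆ K := hγ ▸ hKc.frontier_subset
  set T : Set ℝ := (fun t : ℝ => w + t • p) ⁻¹' K with hT
  have h0 : (0:ℝ) ∈ T := by simpa [hT] using hγK hw
  have hTne : T.Nonempty := ⟨0, h0⟩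
  have hpn : (0:ℝ) < ‖p‖ := norm_pos_iff.mpr hp
  obtain ⟨R, hR⟩ := hK.isBounded.subset_closedBall (0 : ℝ × ℝ)
  have hbdd : BddAbove T := by
    refine ⟨(R + ‖w‖) / ‖p‖, fun s hs => ?_⟩
    have h1 : ‖w + s • p‖ ≤ R := by
      simpa [Metric.mem_closedBall] using hR hs
    have h2 : ‖s • p‖ ≤ R + ‖w‖ := by
      have : ‖(w + s • p) - w‖ ≤ ‖w + s • p‖ + ‖w‖ := norm_sub_le _ _
      simpa using this.trans (by linarith)
    rw [norm_smul] at h2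
    rw [le_div_iff₀ hpn]
    calc s * ‖p‖ ≤ |s| * ‖p‖ := by
          have := le_abs_self s
          nlinarith
      _ ≤ R + ‖w‖ := h2
  have hTcl : IsClosed T := hKc.preimage (by fun_prop)
  set s := sSup T with hs
  have hsT : s ∈ T := hTcl.csSup_mem hTne hbdd
  have hs0 : 0 ≤ s := le_csSup hbdd h0
  have hfr : w + s • p ∈ frontier K := by
    rw [hKc.frontier_eq]
    refine ⟨hsT, fun hint => ?_⟩
    obtain ⟨ε, hε, hball⟩ := Metric.mem_nhds_iff.mp (mem_interior_iff_mem_nhds.mp hint)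
    set δ := ε / (2 * ‖p‖) with hδ
    have hδpos : 0 < δ := by positivity
    have hmem : w + (s + δ) • p ∈ Metric.ball (w + s • p) ε := by
      rw [mem_ball_iff_norm]
      have : w + (s + δ) • p - (w + s • p) = δ • p := by
        rw [add_smul]; abel
      rw [this, norm_smul, Real.norm_eq_abs, abs_of_pos hδpos]
      have hδp : δ * ‖p‖ = ε / 2 := by
        rw [hδ, div_mul_eq_mul_div, mul_comm (2:ℝ) ‖p‖, ← div_div,
          mul_div_assoc, div_self (ne_of_gt hpn), mul_one]
      rw [hδp]; linarith
    have : s + δ ∈ T := hball hmem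
    have := le_csSup hbdd this
    linarith
  have hsγ : w + s • p ∈ γ := hγ ▸ hfr
  have mw : w ∈ γ ∩ {q | ∃ u : ℝ, q = w + u • p} := ⟨hw, 0, by simp⟩
  have mw' : w - p ∈ γ ∩ {q | ∃ u : ℝ, q = w + u • p} :=
    ⟨hw', -1, by rw [neg_one_smul]; abel⟩
  have ms : w + s • p ∈ γ ∩ {q | ∃ u : ℝ, q = w + u • p} := ⟨hsγ, s, rfl⟩
  have hts : t ≤ s := le_csSup hbdd ht
  rcases hline w p hp w mw (w - p) mw' (w + s • p) ms with h | h | h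
  · exact absurd (sub_eq_self.mp h.symm) hp
  · have : s • p = 0 := by
      have := h.symm
      rwa [add_eq_left] at this
    rcases smul_eq_zero.mp this with h' | h'
    · linarith
    · exact absurd h' hp
  · exfalso
    have : (s + 1) • p = 0 := by
      have h2 : w + s • p - (w - p) = (s+1) • p := by rw [add_smul, one_smul]; abel
      rw [← h2, h, sub_self]
    rcases smul_eq_zero.mp this with h' | h'
    · linarith
    · exact absurd h' hp
private lemma fker (p q : ℝ × ℝ) (hp : p ≠ 0) (h : q.1 * p.2 - q.2 * p.1 = 0) :
    ∃ t : ℝ, q = t • p := by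
  have hcase : p.1 ≠ 0 ∨ p.2 ≠ 0 := by
    by_contra hc
    push_neg at hc
    exact hp (Prod.ext hc.1 hc.2)
  rcases hcase with h1 | h2
  · refine ⟨q.1 / p.1, Prod.ext ?_ ?_⟩
    · simp only [Prod.smul_fst, smul_eq_mul]; field_simp
    · simp only [Prod.smul_snd, smul_eq_mul]; field_simp; nlinarith
  · refine ⟨q.2 / p.2, Prod.ext ?_ ?_⟩
    · simp only [Prod.smul_fst, smul_eq_mul]; field_simp; nlinarith
    · simp only [Prod.smul_snd, smul_eq_mul]; field_simp

private lemma eq_of_same (γ : Set (ℝ × ℝ))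
    (hline : ∀ a v : ℝ × ℝ, v ≠ 0 →
      ∀ x ∈ γ ∩ {q | ∃ t : ℝ, q = a + t • v}, ∀ y ∈ γ ∩ {q | ∃ t : ℝ, q = a + t • v},
      ∀ z ∈ γ ∩ {q | ∃ t : ℝ, q = a + t • v}, x = y ∨ x = z ∨ y = z)
    (p : ℝ × ℝ) (hp : p ≠ 0) (x y : ℝ × ℝ)
    (hx : x ∈ γ) (hx' : x - p ∈ γ) (hy : y ∈ γ) (hy' : y - p ∈ γ)
    (t : ℝ) (ht : y = x + t • p) : x = y := by
  have mx : x ∈ γ ∩ {q | ∃ u : ℝ, q = x + u • p} := ⟨hx, 0, by simp⟩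
  have mx' : x - p ∈ γ ∩ {q | ∃ u : ℝ, q = x + u • p} :=
    ⟨hx', -1, by rw [neg_one_smul]; abel⟩
  have my : y ∈ γ ∩ {q | ∃ u : ℝ, q = x + u • p} := ⟨hy, t, ht⟩
  have my' : y - p ∈ γ ∩ {q | ∃ u : ℝ, q = x + u • p} :=
    ⟨hy', t - 1, by rw [sub_smul, one_smul, ht]; abel⟩
  rcases hline x p hp x mx (x - p) mx' y my with h | h | h
  · exact absurd (sub_eq_self.mp h.symm) hp
  · exact h
  · rcases hline x p hp x mx (x - p) mx' (y - p) my' with h2 | h2 | h2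
    · exact absurd (sub_eq_self.mp h2.symm) hp
    · -- x = y - p and x - p = y : then p + p = 0
      exfalso
      have h4 : x = x - (p + p) := by rw [← sub_sub, h]; exact h2
      have hpp : p + p = 0 := sub_eq_self.mp h4.symm
      have e1 : p.1 = 0 := by
        have := congrArg Prod.fst hpp; simp only [Prod.fst_add, Prod.fst_zero] at this; linarith
      have e2 : p.2 = 0 := by
        have := congrArg Prod.snd hpp; simp only [Prod.snd_add, Prod.snd_zero] at this; linarith
      exact hp (Prod.ext e1 e2)
    · have : x = y := by
        have := sub_left_injective h2
        exact this
      exact this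
private lemma key (K : Set (ℝ × ℝ)) (hK : IsCompact K) (hKconv : Convex ℝ K)
    (γ : Set (ℝ × ℝ)) (hγ : γ = frontier K)
    (hline : ∀ a v : ℝ × ℝ, v ≠ 0 →
      ∀ x ∈ γ ∩ {q | ∃ t : ℝ, q = a + t • v}, ∀ y ∈ γ ∩ {q | ∃ t : ℝ, q = a + t • v},
      ∀ z ∈ γ ∩ {q | ∃ t : ℝ, q = a + t • v}, x = y ∨ x = z ∨ y = z)
    (p : ℝ × ℝ) (hp : p ≠ 0) (x y z : ℝ × ℝ)
    (hx : x ∈ γ) (hx' : x - p ∈ γ) (hy : y ∈ γ) (hy' : y - p ∈ γ)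
    (hz : z ∈ γ) (hz' : z - p ∈ γ)
    (h1 : x.1 * p.2 - x.2 * p.1 < y.1 * p.2 - y.2 * p.1)
    (h2 : y.1 * p.2 - y.2 * p.1 < z.1 * p.2 - z.2 * p.1) : False := by
  have hγK : γ ⊆ K := hγ ▸ hK.isClosed.frontier_subset
  have hac : x.1 * p.2 - x.2 * p.1 < z.1 * p.2 - z.2 * p.1 := lt_trans h1 h2
  have hden : (z.1 * p.2 - z.2 * p.1) - (x.1 * p.2 - x.2 * p.1) ≠ 0 := ne_of_gt (by linarith)
  set s : ℝ := ((y.1 * p.2 - y.2 * p.1) - (x.1 * p.2 - x.2 * p.1)) /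
      ((z.1 * p.2 - z.2 * p.1) - (x.1 * p.2 - x.2 * p.1)) with hsdef
  have hs0 : 0 < s := div_pos (by linarith) (by linarith)
  have hs1 : s < 1 := (div_lt_one (by linarith)).mpr (by linarith)
  set u : ℝ × ℝ := x + s • (z - x) with hu
  have huK : u ∈ K := by
    have hux : u = (1 - s) • x + s • z := by rw [hu]; module
    rw [hux]; exact hKconv (hγK hx) (hγK hz) (by linarith) (by linarith) (by ring)
  have hupK : u - p ∈ K := by
    have : u - p = (1 - s) • (x - p) + s • (z - p) := by rw [hu]; module
    rw [this]; exact hKconv (hγK hx') (hγK hz') (by linarith) (by linarith) (by ring)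
  have hf : (u - y).1 * p.2 - (u - y).2 * p.1 = 0 := by
    have e1 : (u - y).1 = x.1 + s * (z.1 - x.1) - y.1 := by
      rw [hu]; simp [Prod.smul_fst, smul_eq_mul]
    have e2 : (u - y).2 = x.2 + s * (z.2 - x.2) - y.2 := by
      rw [hu]; simp [Prod.smul_snd, smul_eq_mul]
    rw [e1, e2, hsdef]
    linear_combination div_mul_cancel₀ (y.1 * p.2 - y.2 * p.1 - (x.1 * p.2 - x.2 * p.1)) hden
  obtain ⟨t, htt⟩ := fker p (u - y) hp hf
  have huy : u = y + t • p := by rw [← htt]; abel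
  have ht0 : t ≤ 0 := aux_le K hK γ hγ hline p hp y hy hy' t (by rw [← huy]; exact huK)
  have ht0' : 0 ≤ t := by
    have hnp : -p ≠ 0 := neg_ne_zero.mpr hp
    have h5 : (y - p) - (-p) ∈ γ := by rw [sub_neg_eq_add, sub_add_cancel]; exact hy
    have h6 : (y - p) + (-t) • (-p) ∈ K := by
      have e : (y - p) + (-t) • (-p) = u - p := by rw [huy]; module
      rw [e]; exact hupK
    have := aux_le K hK γ hγ hline (-p) hnp (y - p) hy' h5 (-t) h6
    linarith
  have huy0 : y = x + s • (z - x) := by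
    rw [hu] at huy
    rw [huy, le_antisymm ht0 ht0', zero_smul, add_zero]
  have hzx : z - x ≠ 0 := by
    intro h
    rw [show z = x from by rwa [sub_eq_zero] at h] at hac
    exact lt_irrefl _ hac
  have mx : x ∈ γ ∩ {q | ∃ u : ℝ, q = x + u • (z - x)} := ⟨hx, 0, by simp⟩
  have my : y ∈ γ ∩ {q | ∃ u : ℝ, q = x + u • (z - x)} := ⟨hy, s, huy0⟩
  have mz : z ∈ γ ∩ {q | ∃ u : ℝ, q = x + u • (z - x)} := ⟨hz, 1, by rw [one_smul]; abel⟩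
  rcases hline x (z - x) hzx x mx y my z mz with h | h | h
  · rw [h] at h1; exact lt_irrefl _ h1
  · rw [h] at hac; exact lt_irrefl _ hac
  · rw [h] at h2; exact lt_irrefl _ h2
/-- Lemma A.1: if `γ` is the boundary of a compact convex body in `ℝ²` meeting every
line in at most two points, then `γ ∩ (γ + p)` has at most two points for `p ≠ 0`. -/
theorem stmt4 (K : Set (ℝ × ℝ)) (hK : IsCompact K) (hKconv : Convex ℝ K)
    (hKint : (interior K).Nonempty) (γ : Set (ℝ × ℝ)) (hγ : γ = frontier K)
    (hline : ∀ a v : ℝ × ℝ, v ≠ 0 →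
      ∀ x ∈ γ ∩ {q | ∃ t : ℝ, q = a + t • v}, ∀ y ∈ γ ∩ {q | ∃ t : ℝ, q = a + t • v},
      ∀ z ∈ γ ∩ {q | ∃ t : ℝ, q = a + t • v}, x = y ∨ x = z ∨ y = z)
    (p : ℝ × ℝ) (hp : p ≠ 0) :
    ∀ x ∈ γ ∩ ((· + p) '' γ), ∀ y ∈ γ ∩ ((· + p) '' γ), ∀ z ∈ γ ∩ ((· + p) '' γ),
      x = y ∨ x = z ∨ y = z := by
  have mem : ∀ w ∈ γ ∩ ((· + p) '' γ), w ∈ γ ∧ w - p ∈ γ := by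
    rintro w ⟨h1, g, hg, rfl⟩
    exact ⟨h1, by simpa using hg⟩
  intro x hx y hy z hz
  obtain ⟨hxγ, hxγ'⟩ := mem x hx
  obtain ⟨hyγ, hyγ'⟩ := mem y hy
  obtain ⟨hzγ, hzγ'⟩ := mem z hz
  by_contra hcon
  push_neg at hcon
  obtain ⟨hxy, hxz, hyz⟩ := hcon
  -- distinct f-values
  have fdist : ∀ w w' : ℝ × ℝ, w ∈ γ → w - p ∈ γ → w' ∈ γ → w' - p ∈ γ →
      w.1 * p.2 - w.2 * p.1 = w'.1 * p.2 - w'.2 * p.1 → w = w' := by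
    intro w w' hw hw' hw2 hw2' hf
    have hk : (w' - w).1 * p.2 - (w' - w).2 * p.1 = 0 := by
      simp only [Prod.fst_sub, Prod.snd_sub]; linarith
    obtain ⟨t, htt⟩ := fker p (w' - w) hp hk
    exact eq_of_same γ hline p hp w w' hw hw' hw2 hw2' t (by rw [← htt]; abel)
  have hab : x.1 * p.2 - x.2 * p.1 ≠ y.1 * p.2 - y.2 * p.1 :=
    fun h => hxy (fdist x y hxγ hxγ' hyγ hyγ' h)
  have hac : x.1 * p.2 - x.2 * p.1 ≠ z.1 * p.2 - z.2 * p.1 :=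
    fun h => hxz (fdist x z hxγ hxγ' hzγ hzγ' h)
  have hbc : y.1 * p.2 - y.2 * p.1 ≠ z.1 * p.2 - z.2 * p.1 :=
    fun h => hyz (fdist y z hyγ hyγ' hzγ hzγ' h)
  rcases hab.lt_or_gt with h1 | h1 <;> rcases hbc.lt_or_gt with h2 | h2 <;>
    rcases hac.lt_or_gt with h3 | h3
  · exact key K hK hKconv γ hγ hline p hp x y z hxγ hxγ' hyγ hyγ' hzγ hzγ' h1 h2
  · exact key K hK hKconv γ hγ hline p hp x y z hxγ hxγ' hyγ hyγ' hzγ hzγ' h1 h2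
  · exact key K hK hKconv γ hγ hline p hp x z y hxγ hxγ' hzγ hzγ' hyγ hyγ' h3 h2
  · exact key K hK hKconv γ hγ hline p hp z x y hzγ hzγ' hxγ hxγ' hyγ hyγ' h3 h1
  · exact key K hK hKconv γ hγ hline p hp y x z hyγ hyγ' hxγ hxγ' hzγ hzγ' h1 h3
  · exact key K hK hKconv γ hγ hline p hp y z x hyγ hyγ' hzγ hzγ' hxγ hxγ' h2 h3
  · exact absurd h3 (not_lt.mpr (le_of_lt (lt_trans h2 h1)))
  · exact key K hK hKconv γ hγ hline p hp z y x hzγ hzγ' hyγ hyγ' hxγ hxγ' h2 h1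
end

section
/- Let γ be a closed convex curve in ℝ², invariant under q ↦ -q, meeting every line in at most two points, and let q₃ ∈ γ. Then the intersection γ ∩ (γ - q₃) contains exactly two points. -/
open Topology

/-- Cramer's rule in the plane: if `{z - x, d}` has nonzero determinant, any `y`
decomposes as `x + s • (z - x) + r • d` with explicit `s, r`. -/
lemma aux_cramer (x y z d : ℝ × ℝ)
    (hD : (z.1 - x.1) * d.2 - (z.2 - x.2) * d.1 ≠ 0) :
    y = x + (((y.1 - x.1) * d.2 - (y.2 - x.2) * d.1) /
        ((z.1 - x.1) * d.2 - (z.2 - x.2) * d.1)) • (z - x)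
      + (((z.1 - x.1) * (y.2 - x.2) - (z.2 - x.2) * (y.1 - x.1)) /
        ((z.1 - x.1) * d.2 - (z.2 - x.2) * d.1)) • d := by
  rw [Prod.ext_iff]
  constructor <;>
  · simp only [Prod.fst_add, Prod.snd_add, Prod.smul_fst, Prod.smul_snd, Prod.fst_sub,
      Prod.snd_sub, smul_eq_mul]
    rw [div_mul_eq_mul_div, div_mul_eq_mul_div, add_assoc, ← add_div, eq_comm, ← eq_sub_iff_add_eq', div_eq_iff hD]
    ring

/-- For a closed convex curve `γ` (boundary of a compact convex body symmetric about
the origin) meeting every line in at most two points, and `q₃ ∈ γ`, the intersection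
`γ ∩ (γ - q₃)` has exactly two points. -/
theorem stmt5 (K : Set (ℝ × ℝ)) (hK : IsCompact K) (hKconv : Convex ℝ K)
    (hKint : (interior K).Nonempty) (hKsym : ∀ q, q ∈ K ↔ -q ∈ K)
    (γ : Set (ℝ × ℝ)) (hγ : γ = frontier K)
    (hline : ∀ a v : ℝ × ℝ, v ≠ 0 →
      ∀ x ∈ γ ∩ {q | ∃ t : ℝ, q = a + t • v}, ∀ y ∈ γ ∩ {q | ∃ t : ℝ, q = a + t • v},
      ∀ z ∈ γ ∩ {q | ∃ t : ℝ, q = a + t • v}, x = y ∨ x = z ∨ y = z)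
    (q₃ : ℝ × ℝ) (hq₃ : q₃ ∈ γ) :
    ∃ a b : ℝ × ℝ, a ≠ b ∧ γ ∩ ((· - q₃) '' γ) = {a, b} := by
  -- Basic setup
  have hKcl : IsClosed K := hK.isClosed
  have hγK : γ ⊆ K := hγ ▸ hKcl.frontier_subset
  -- 0 is an interior point of K
  have h0int : (0 : ℝ × ℝ) ∈ interior K := by
    obtain ⟨p, hp⟩ := hKint
    have hKneg : -K = K := by
      ext x
      rw [Set.mem_neg, ← hKsym x]
    have hmp : -p ∈ interior K := by
      rw [mem_interior] at hp ⊢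
      obtain ⟨U, hUK, hUopen, hpU⟩ := hp
      refine ⟨-U, ?_, hUopen.neg, ?_⟩
      · intro w hw
        rw [Set.mem_neg] at hw
        exact (hKsym w).2 (hUK hw)
      · rw [Set.mem_neg, neg_neg]
        exact hpU
    have h0 := hKconv.interior hp hmp (by norm_num : (0:ℝ) ≤ 1/2)
      (by norm_num : (0:ℝ) ≤ 1/2) (by norm_num)
    simpa using h0
  have hnhds : K ∈ 𝓝 (0 : ℝ × ℝ) := mem_interior_iff_mem_nhds.mp h0int
  have habs : Absorbent ℝ K := absorbent_nhds_zero hnhds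
  have hvb : Bornology.IsVonNBounded ℝ K := (NormedSpace.isVonNBounded_iff ℝ).2 hK.isBounded
  -- gauge characterizations
  have hfr : ∀ x, x ∈ γ ↔ gauge K x = 1 := by
    intro x
    rw [hγ]
    exact (gauge_eq_one_iff_mem_frontier hKconv hnhds).symm
  have hle : ∀ x ∈ K, gauge K x ≤ 1 := fun x hx => gauge_le_one_of_mem hx
  have hneg : ∀ x, gauge K (-x) = gauge K x := gauge_neg (fun x hx => (hKsym x).1 hx)
  have hsm : ∀ (a : ℝ) (x : ℝ × ℝ), 0 ≤ a → gauge K (a • x) = a * gauge K x := by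
    intro a x ha
    rw [gauge_smul_of_nonneg ha, smul_eq_mul]
  have hg0 : ∀ u : ℝ × ℝ, u ≠ 0 → gauge K u ≠ 0 := by
    intro u hu h
    exact hu ((gauge_eq_zero habs hvb).1 h)
  have hq₃1 : gauge K q₃ = 1 := (hfr q₃).1 hq₃
  have hd : q₃ ≠ 0 := by
    intro h
    rw [h, gauge_zero] at hq₃1
    norm_num at hq₃1
  -- the collinearity lemma: three points of γ on a line through y in direction q₃
  have hcoll : ∀ (y : ℝ × ℝ) (r : ℝ), y ∈ γ → y + q₃ ∈ γ → y + r • q₃ ∈ γ →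
      r = 0 ∨ r = 1 := by
    intro y r hy h1 h2
    rcases hline y q₃ hd y ⟨hy, 0, by simp⟩ (y + q₃) ⟨h1, 1, by simp⟩
        (y + r • q₃) ⟨h2, r, rfl⟩ with h | h | h
    · exact absurd (by simpa using h.symm) hd
    · left
      have : r • q₃ = 0 := by simpa using h.symm
      rcases smul_eq_zero.1 this with h' | h'
      · exact h'
      · exact absurd h' hd
    · right
      have h' : q₃ = r • q₃ := by
        have := h
        rwa [add_right_inj] at this
      have : (1 - r) • q₃ = 0 := by
        rw [sub_smul, one_smul, sub_eq_zero]
        exact h'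
      rcases smul_eq_zero.1 this with h'' | h''
      · linarith [h'']
      · exact absurd h'' hd
  -- boundary points in the middle of segments of K: both endpoints on boundary
  have frcombo : ∀ (u p q : ℝ × ℝ) (s : ℝ), 0 < s → s < 1 → p ∈ K → q ∈ K →
      u = (1 - s) • p + s • q → u ∈ γ → p ∈ γ ∧ q ∈ γ := by
    intro u p q s hs0 hs1 hp hq hu huγ
    have h1 : gauge K u = 1 := (hfr u).1 huγ
    have hpk := hle p hp
    have hqk := hle q hq
    have hpn := gauge_nonneg (s := K) p
    have hqn := gauge_nonneg (s := K) q
    have hadd : gauge K u ≤ (1 - s) * gauge K p + s * gauge K q := by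
      rw [hu]
      calc gauge K ((1 - s) • p + s • q) ≤ gauge K ((1 - s) • p) + gauge K (s • q) :=
            gauge_add_le hKconv habs _ _
        _ = (1 - s) * gauge K p + s * gauge K q := by
            rw [hsm _ _ (by linarith), hsm _ _ hs0.le]
    constructor <;> rw [hfr]
    · nlinarith
    · nlinarith
  -- the chord lemma
  have hchord : ∀ (y : ℝ × ℝ) (r : ℝ), y ∈ γ → y + q₃ ∈ γ → y + r • q₃ ∈ K →
      0 ≤ r ∧ r ≤ 1 := by
    intro y r hy1 hy2 hpK
    rcases le_or_gt 0 r with hr0 | hr0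
    · rcases le_or_gt r 1 with hr1 | hr1
      · exact ⟨hr0, hr1⟩
      · -- r > 1 : y + q₃ is strictly between y and y + r•q₃
        exfalso
        set s : ℝ := 1 / r with hs_def
        have hrne : r ≠ 0 := by linarith
        have hs0 : 0 < s := by positivity
        have hs1 : s < 1 := by
          rw [hs_def, div_lt_one (by linarith)]
          linarith
        have hsr : s * r = 1 := by rw [hs_def, one_div, inv_mul_cancel₀ hrne]
        have hu : y + q₃ = (1 - s) • y + s • (y + r • q₃) := by
          have : (1 - s) • y + s • (y + r • q₃) = y + (s * r) • q₃ := by module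
          rw [this, hsr, one_smul]
        obtain ⟨-, hpγ⟩ := frcombo (y + q₃) y (y + r • q₃) s hs0 hs1 (hγK hy1) hpK hu hy2
        rcases hcoll y r hy1 hy2 hpγ with h | h <;> linarith
    · -- r < 0 : y is strictly between y + r•q₃ and y + q₃
      exfalso
      set s : ℝ := -r / (1 - r) with hs_def
      have hden : (0:ℝ) < 1 - r := by linarith
      have hs0 : 0 < s := by
        apply div_pos <;> linarith
      have hs1 : s < 1 := by
        rw [hs_def, div_lt_one hden]
        linarith
      have hco : (1 - s) * r + s = 0 := by
        rw [hs_def]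
        field_simp
        ring
      have hu : y = (1 - s) • (y + r • q₃) + s • (y + q₃) := by
        have : (1 - s) • (y + r • q₃) + s • (y + q₃) = y + ((1 - s) * r + s) • q₃ := by
          module
        rw [this, hco, zero_smul, add_zero]
      obtain ⟨hpγ, -⟩ := frcombo y (y + r • q₃) (y + q₃) s hs0 hs1 hpK (hγK hy2) hu hy1
      rcases hcoll y r hy1 hy2 hpγ with h | h <;> linarith
  -- kernel of the determinant functional
  have hker : ∀ p : ℝ × ℝ, p.1 * q₃.2 - p.2 * q₃.1 = 0 → ∃ t : ℝ, p = t • q₃ := by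
    intro p hp
    have hcases : q₃.1 ≠ 0 ∨ q₃.2 ≠ 0 := by
      by_contra h
      push_neg at h
      exact hd (Prod.ext h.1 h.2)
    rcases hcases with h1 | h2
    · refine ⟨p.1 / q₃.1, ?_⟩
      rw [Prod.ext_iff]
      constructor <;> simp only [Prod.smul_fst, Prod.smul_snd, smul_eq_mul]
      · field_simp
      · field_simp
        nlinarith [hp]
    · refine ⟨p.2 / q₃.2, ?_⟩
      rw [Prod.ext_iff]
      constructor <;> simp only [Prod.smul_fst, Prod.smul_snd, smul_eq_mul]
      · field_simp
        nlinarith [hp]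
      · field_simp
  -- injectivity of the determinant functional on intersection points
  have hsame : ∀ x y : ℝ × ℝ, x ∈ γ → x + q₃ ∈ γ → y ∈ γ → y + q₃ ∈ γ →
      x.1 * q₃.2 - x.2 * q₃.1 = y.1 * q₃.2 - y.2 * q₃.1 → x = y := by
    intro x y hx hx2 hy hy2 hf
    have h0 : (y - x).1 * q₃.2 - (y - x).2 * q₃.1 = 0 := by
      simp only [Prod.fst_sub, Prod.snd_sub]
      linarith [hf]
    obtain ⟨t, ht⟩ := hker (y - x) h0
    have hyx : y = x + t • q₃ := by
      rw [← ht]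
      abel
    rcases hcoll x t hx hx2 (hyx ▸ hy) with h | h
    · rw [hyx, h, zero_smul, add_zero]
    · exfalso
      rw [h, one_smul] at hyx
      have h2q : x + (2:ℝ) • q₃ ∈ γ := by
        have : x + (2:ℝ) • q₃ = y + q₃ := by rw [hyx]; module
        rw [this]
        exact hy2
      rcases hcoll x 2 hx hx2 h2q with h' | h' <;> norm_num at h'
  -- the key three-point lemma
  have key : ∀ x y z : ℝ × ℝ, x ∈ γ → x + q₃ ∈ γ → y ∈ γ → y + q₃ ∈ γ →
      z ∈ γ → z + q₃ ∈ γ → x ≠ y → y ≠ z → x ≠ z →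
      x.1 * q₃.2 - x.2 * q₃.1 < y.1 * q₃.2 - y.2 * q₃.1 →
      y.1 * q₃.2 - y.2 * q₃.1 < z.1 * q₃.2 - z.2 * q₃.1 → False := by
    intro x y z hx hx2 hy hy2 hz hz2 hxy hyz hxz hlt1 hlt2
    have hD : (0:ℝ) < (z.1 - x.1) * q₃.2 - (z.2 - x.2) * q₃.1 := by nlinarith [hlt1, hlt2]
    have hD' : (z.1 - x.1) * q₃.2 - (z.2 - x.2) * q₃.1 ≠ 0 := ne_of_gt hD
    set s : ℝ := ((y.1 - x.1) * q₃.2 - (y.2 - x.2) * q₃.1) /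
        ((z.1 - x.1) * q₃.2 - (z.2 - x.2) * q₃.1) with hs_def
    set r : ℝ := ((z.1 - x.1) * (y.2 - x.2) - (z.2 - x.2) * (y.1 - x.1)) /
        ((z.1 - x.1) * q₃.2 - (z.2 - x.2) * q₃.1) with hr_def
    have hy_dec : y = x + s • (z - x) + r • q₃ := aux_cramer x y z q₃ hD'
    have hs0 : 0 < s := by
      rw [hs_def]
      apply div_pos _ hD
      nlinarith [hlt1]
    have hs1 : s < 1 := by
      rw [hs_def, div_lt_one hD]
      nlinarith [hlt2]
    -- the two combination points are in K
    have hp₁K : x + s • (z - x) ∈ K := by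
      have h := hKconv (hγK hx) (hγK hz) (by linarith : (0:ℝ) ≤ 1 - s) hs0.le (by ring)
      have e : (1 - s) • x + s • z = x + s • (z - x) := by module
      rwa [e] at h
    have hp₂K : x + s • (z - x) + q₃ ∈ K := by
      have h := hKconv (hγK hx2) (hγK hz2) (by linarith : (0:ℝ) ≤ 1 - s) hs0.le (by ring)
      have e : (1 - s) • (x + q₃) + s • (z + q₃) = x + s • (z - x) + q₃ := by module
      rwa [e] at h
    have e1 : x + s • (z - x) = y + (-r) • q₃ := by rw [hy_dec]; module
    have e2 : x + s • (z - x) + q₃ = y + (1 - r) • q₃ := by rw [hy_dec]; module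
    have h1 := hchord y (-r) hy hy2 (e1 ▸ hp₁K)
    have h2 := hchord y (1 - r) hy hy2 (e2 ▸ hp₂K)
    have hr0 : r = 0 := by
      rcases h1 with ⟨ha, -⟩
      rcases h2 with ⟨-, hb⟩
      linarith
    have hy' : y = x + s • (z - x) := by
      rw [hy_dec, hr0, zero_smul, add_zero]
    have hzx : z - x ≠ 0 := sub_ne_zero.2 (Ne.symm hxz)
    rcases hline x (z - x) hzx x ⟨hx, 0, by simp⟩ y ⟨hy, s, hy'⟩
        z ⟨hz, 1, by simp⟩ with h | h | h
    · exact hxy h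
    · exact hxz h
    · exact hyz h
  -- any three points of the intersection coincide pairwise (upper bound)
  have key3 : ∀ x y z : ℝ × ℝ, x ∈ γ → x + q₃ ∈ γ → y ∈ γ → y + q₃ ∈ γ →
      z ∈ γ → z + q₃ ∈ γ → x ≠ y → y ≠ z → x ≠ z → False := by
    intro x y z hx hx2 hy hy2 hz hz2 hxy hyz hxz
    have f1 : x.1 * q₃.2 - x.2 * q₃.1 ≠ y.1 * q₃.2 - y.2 * q₃.1 :=
      fun h => hxy (hsame x y hx hx2 hy hy2 h)
    have f2 : y.1 * q₃.2 - y.2 * q₃.1 ≠ z.1 * q₃.2 - z.2 * q₃.1 :=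
      fun h => hyz (hsame y z hy hy2 hz hz2 h)
    have f3 : x.1 * q₃.2 - x.2 * q₃.1 ≠ z.1 * q₃.2 - z.2 * q₃.1 :=
      fun h => hxz (hsame x z hx hx2 hz hz2 h)
    rcases f1.lt_or_gt with a | a <;> rcases f2.lt_or_gt with b | b <;>
      rcases f3.lt_or_gt with c | c
    · exact key x y z hx hx2 hy hy2 hz hz2 hxy hyz hxz a b
    · linarith
    · exact key x z y hx hx2 hz hz2 hy hy2 hxz (Ne.symm hyz) hxy c b
    · exact key z x y hz hz2 hx hx2 hy hy2 (Ne.symm hxz) hxy (Ne.symm hyz) c a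
    · exact key y x z hy hy2 hx hx2 hz hz2 (Ne.symm hxy) hxz hyz a c
    · exact key y z x hy hy2 hz hz2 hx hx2 hyz (Ne.symm hxz) (Ne.symm hxy) b c
    · linarith
    · exact key z y x hz hz2 hy hy2 hx hx2 (Ne.symm hyz) (Ne.symm hxy) (Ne.symm hxz) b a
  -- existence of one intersection point via the intermediate value theorem
  have hnq₃ : ‖q₃‖ ≠ 0 := norm_ne_zero_iff.2 hd
  have hrank : 1 < Module.rank ℝ (ℝ × ℝ) := by
    rw [rank_prod', Module.rank_self ℝ, one_add_one_eq_two]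
    exact Cardinal.one_lt_two
  have hsphere := isConnected_sphere hrank (0 : ℝ × ℝ) zero_le_one
  have hgc : Continuous (gauge K) := continuous_gauge hKconv hnhds
  have hsph_ne : ∀ u ∈ Metric.sphere (0 : ℝ × ℝ) 1, gauge K u ≠ 0 := by
    intro u hu
    apply hg0
    intro h
    rw [Metric.mem_sphere, dist_zero_right, h, norm_zero] at hu
    norm_num at hu
  have hcont : ContinuousOn (fun u : ℝ × ℝ => (gauge K u)⁻¹ • u) (Metric.sphere 0 1) :=
    ContinuousOn.smul (hgc.continuousOn.inv₀ hsph_ne) continuousOn_id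
  have hC : IsConnected ((fun u : ℝ × ℝ => (gauge K u)⁻¹ • u) '' Metric.sphere 0 1) :=
    hsphere.image _ hcont
  have hCγ : (fun u : ℝ × ℝ => (gauge K u)⁻¹ • u) '' Metric.sphere 0 1 ⊆ γ := by
    rintro _ ⟨u, hu, rfl⟩
    rw [hfr, hsm _ _ (inv_nonneg.2 (gauge_nonneg u))]
    field_simp [hsph_ne u hu]
  have hmem_of : ∀ w : ℝ × ℝ, w ∈ γ →
      w ∈ (fun u : ℝ × ℝ => (gauge K u)⁻¹ • u) '' Metric.sphere 0 1 := by
    intro w hw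
    have hw1 : gauge K w = 1 := (hfr w).1 hw
    have hwne : w ≠ 0 := by
      intro h
      rw [h, gauge_zero] at hw1
      norm_num at hw1
    have hnw : ‖w‖ ≠ 0 := norm_ne_zero_iff.2 hwne
    refine ⟨‖w‖⁻¹ • w, ?_, ?_⟩
    · rw [Metric.mem_sphere, dist_zero_right, norm_smul, norm_inv, norm_norm]
      field_simp
    · have hgw : gauge K (‖w‖⁻¹ • w) = ‖w‖⁻¹ := by
        rw [hsm _ _ (inv_nonneg.2 (norm_nonneg w)), hw1, mul_one]
      show (gauge K (‖w‖⁻¹ • w))⁻¹ • ‖w‖⁻¹ • w = w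
      rw [hgw, inv_inv, smul_smul, mul_inv_cancel₀ hnw, one_smul]
  have hmq₃γ : -q₃ ∈ γ := by
    rw [hfr, hneg]
    exact hq₃1
  have hIVT := hC.isPreconnected.intermediate_value (hmem_of (-q₃) hmq₃γ) (hmem_of q₃ hq₃)
    (Continuous.continuousOn (hgc.comp (continuous_add_right q₃)))
  have hone : (1 : ℝ) ∈ Set.Icc ((fun x => gauge K (x + q₃)) (-q₃))
      ((fun x => gauge K (x + q₃)) q₃) := by
    constructor
    · show gauge K (-q₃ + q₃) ≤ 1
      rw [neg_add_cancel, gauge_zero]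
      norm_num
    · show (1:ℝ) ≤ gauge K (q₃ + q₃)
      have : q₃ + q₃ = (2:ℝ) • q₃ := by module
      rw [this, hsm _ _ (by norm_num), hq₃1]
      norm_num
  obtain ⟨x, hxC, hx1⟩ := hIVT hone
  have hxγ : x ∈ γ := hCγ hxC
  have hxq₃γ : x + q₃ ∈ γ := (hfr _).2 hx1
  -- the second point
  set b : ℝ × ℝ := -x - q₃ with hb_def
  have hbγ : b ∈ γ := by
    rw [hfr]
    have : b = -(x + q₃) := by rw [hb_def]; abel
    rw [this, hneg]
    exact (hfr _).1 hxq₃γ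
  have hbq₃γ : b + q₃ ∈ γ := by
    rw [hfr]
    have : b + q₃ = -x := by rw [hb_def]; abel
    rw [this, hneg]
    exact (hfr _).1 hxγ
  have hxb : x ≠ b := by
    intro h
    have hx1' : gauge K x = 1 := (hfr _).1 hxγ
    have h2 : q₃ = -((2:ℝ) • x) := by
      rw [hb_def] at h
      have h2' := congrArg (fun v : ℝ × ℝ => v + x + q₃) h
      have h3 : x + x + q₃ = 0 := by rw [h2']; abel
      have e : q₃ = -(x + x) := by
        rw [eq_neg_iff_add_eq_zero, add_comm]
        exact h3
      rw [e, two_smul]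
    have : gauge K q₃ = 2 := by
      rw [h2, hneg, hsm _ _ (by norm_num), hx1']
      norm_num
    rw [hq₃1] at this
    norm_num at this
  refine ⟨x, b, hxb, ?_⟩
  ext c
  simp only [Set.mem_inter_iff, Set.mem_image, Set.mem_insert_iff, Set.mem_singleton_iff]
  constructor
  · rintro ⟨hcγ, w, hwγ, hwc⟩
    have hcq₃ : c + q₃ ∈ γ := by
      have : w = c + q₃ := by rw [← hwc]; abel
      rwa [this] at hwγ
    by_contra h
    push_neg at h
    exact key3 c x b hcγ hcq₃ hxγ hxq₃γ hbγ hbq₃γ h.1 hxb h.2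
  · rintro (h | h)
    · rw [h]
      exact ⟨hxγ, x + q₃, hxq₃γ, by abel⟩
    · rw [h]
      exact ⟨hbγ, b + q₃, hbq₃γ, by abel⟩
end

section
/- Let γ be a closed convex curve in ℝ², invariant under q ↦ -q, meeting every line in at most two points. Then for every q₃ ∈ γ there exists a unique unordered pair {q₁, q₂} of points of γ with q₁ ≠ q₂ (as a pair, determined uniquely) satisfying q₁ + q₂ + q₃ = 0. -/
open Filter Topology Set
/-- Uniqueness of the pair: for a closed convex curve `γ` (boundary of a centrally
symmetric compact convex body) meeting every line in at most two points, for every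
`q₃ ∈ γ` there is a unique unordered pair `{q₁, q₂} ⊆ γ`, `q₁ ≠ q₂`, with
`q₁ + q₂ + q₃ = 0`. -/
theorem stmt6 (K : Set (ℝ × ℝ)) (hK : IsCompact K) (hKconv : Convex ℝ K)
    (hKint : (interior K).Nonempty) (hKsym : ∀ q, q ∈ K ↔ -q ∈ K)
    (γ : Set (ℝ × ℝ)) (hγ : γ = frontier K)
    (hline : ∀ a v : ℝ × ℝ, v ≠ 0 →
      ∀ x ∈ γ ∩ {q | ∃ t : ℝ, q = a + t • v}, ∀ y ∈ γ ∩ {q | ∃ t : ℝ, q = a + t • v},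
      ∀ z ∈ γ ∩ {q | ∃ t : ℝ, q = a + t • v}, x = y ∨ x = z ∨ y = z) :
    ∀ q₃ ∈ γ, ∃! P : Set (ℝ × ℝ),
      ∃ q₁ q₂, q₁ ≠ q₂ ∧ q₁ ∈ γ ∧ q₂ ∈ γ ∧ q₁ + q₂ + q₃ = 0 ∧ P = {q₁, q₂} := by
  subst hγ
  have hKcl : IsClosed K := hK.isClosed
  have hsymm : ∀ x ∈ K, -x ∈ K := fun x hx => (hKsym x).1 hx
  -- 0 is an interior point
  obtain ⟨x₀, hx₀⟩ := hKint
  have hx₀' : -x₀ ∈ interior K := by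
    rw [mem_interior_iff_mem_nhds, Metric.mem_nhds_iff] at hx₀ ⊢
    obtain ⟨ε, hε, hb⟩ := hx₀
    refine ⟨ε, hε, fun y hy => (hKsym y).2 (hb ?_)⟩
    have : dist (-y) x₀ < ε := by
      rw [show x₀ = -(-x₀) by simp, dist_neg_neg]
      exact hy
    exact this
  have h0 : (0 : ℝ × ℝ) ∈ interior K := by
    have h := hKconv.interior hx₀ hx₀' (by norm_num : (0:ℝ) ≤ 1/2)
      (by norm_num : (0:ℝ) ≤ 1/2) (by norm_num)
    simpa using h
  have hnhds : K ∈ 𝓝 (0 : ℝ × ℝ) := mem_interior_iff_mem_nhds.1 h0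
  have habs : Absorbent ℝ K := absorbent_nhds_zero hnhds
  have hbdd : Bornology.IsVonNBounded ℝ K := NormedSpace.isVonNBounded_of_isBounded _ hK.isBounded
  have hg1 : ∀ x : ℝ × ℝ, gauge K x = 1 ↔ x ∈ frontier K := fun x =>
    gauge_eq_one_iff_mem_frontier hKconv hnhds
  have hgneg : ∀ x : ℝ × ℝ, gauge K (-x) = gauge K x := gauge_neg hsymm
  have hgpos : ∀ x : ℝ × ℝ, x ≠ 0 → 0 < gauge K x := fun x hx => (gauge_pos habs hbdd).2 hx
  have hgc : Continuous (gauge K) := continuous_gauge hKconv hnhds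
  have hfneg : ∀ x : ℝ × ℝ, x ∈ frontier K → -x ∈ frontier K := fun x hx =>
    (hg1 _).1 (by rw [hgneg]; exact (hg1 _).2 hx)
  have hfK : frontier K ⊆ K := hKcl.frontier_subset
  -- no three distinct collinear points on the frontier
  have hcol : ∀ x y z : ℝ × ℝ, x ∈ frontier K → y ∈ frontier K → z ∈ frontier K →
      x ≠ y → x ≠ z → y ≠ z → ∀ t : ℝ, z = x + t • (y - x) → False := by
    intro x y z hx hy hz hxy hxz hyz t ht
    rcases hline x (y - x) (sub_ne_zero.2 hxy.symm) x ⟨hx, 0, by simp⟩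
      y ⟨hy, 1, by rw [one_smul]; abel⟩ z ⟨hz, t, ht⟩ with h | h | h
    exacts [hxy h, hxz h, hyz h]
  -- chord lemma: the portion of a line through two frontier points inside K is the segment
  have hchord : ∀ x y : ℝ × ℝ, x ∈ frontier K → y ∈ frontier K → x ≠ y →
      ∀ t : ℝ, x + t • (y - x) ∈ K → 0 ≤ t ∧ t ≤ 1 := by
    intro x y hx hy hxy t hz
    have hyx : y - x ≠ 0 := sub_ne_zero.2 hxy.symm
    constructor
    · by_contra h
      push_neg at h
      by_cases hzi : x + t • (y - x) ∈ interior K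
      · have h1 : (0:ℝ) < 1 / (1 - t) := div_pos one_pos (by linarith)
        have h2 : (0:ℝ) ≤ -t / (1 - t) := div_nonneg (by linarith) (by linarith)
        have ht1 : (1:ℝ) - t ≠ 0 := by intro h'; linarith
        have h3 : 1 / (1 - t) + -t / (1 - t) = 1 := by
          field_simp; ring
        have h4 : (1 / (1 - t)) • (x + t • (y - x)) + (-t / (1 - t)) • y = x := by
          apply Prod.ext <;>
            simp only [Prod.smul_fst, Prod.smul_snd, Prod.fst_add, Prod.snd_add,
              Prod.smul_fst, Prod.smul_snd, Prod.fst_sub, Prod.snd_sub, smul_eq_mul] <;>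
            field_simp <;> ring
        have hxin : x ∈ interior K :=
          h4 ▸ hKconv.combo_interior_closure_mem_interior hzi
            (subset_closure (hfK hy)) h1 h2 h3
        rw [hKcl.frontier_eq] at hx
        exact hx.2 hxin
      · have hzf : x + t • (y - x) ∈ frontier K := by
          rw [hKcl.frontier_eq]; exact ⟨hz, hzi⟩
        have hzx : x ≠ x + t • (y - x) := by
          intro he
          have : t • (y - x) = 0 := by
            have := he.symm
            rwa [add_eq_left] at this
          rcases smul_eq_zero.1 this with h' | h'
          · exact absurd h' (by linarith)
          · exact hyx h'
        have hzy : y ≠ x + t • (y - x) := by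
          intro he
          have h6 : y - x = t • (y - x) := by
            have := congrArg (fun p => p - x) he
            simpa using this
          have h5 : (1 - t) • (y - x) = 0 := by
            rw [sub_smul, one_smul, ← h6]; abel
          rcases smul_eq_zero.1 h5 with h' | h'
          · linarith
          · exact hyx h'
        exact hcol x y _ hx hy hzf hxy hzx hzy t rfl
    · by_contra h
      push_neg at h
      by_cases hzi : x + t • (y - x) ∈ interior K
      · have ht0 : (0:ℝ) < t := by linarith
        have h1 : (0:ℝ) < 1 / t := by positivity
        have h2 : (0:ℝ) ≤ 1 - 1 / t := by
          have : 1 / t < 1 := by rw [div_lt_one ht0]; linarith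
          linarith
        have h3 : 1 / t + (1 - 1 / t) = 1 := by ring
        have ht1 : t ≠ 0 := by intro h'; linarith
        have h4 : (1 / t) • (x + t • (y - x)) + (1 - 1 / t) • x = y := by
          apply Prod.ext <;>
            simp only [Prod.smul_fst, Prod.smul_snd, Prod.fst_add, Prod.snd_add,
              Prod.fst_sub, Prod.snd_sub, smul_eq_mul] <;>
            field_simp <;> ring
        have hyin : y ∈ interior K :=
          h4 ▸ hKconv.combo_interior_closure_mem_interior hzi
            (subset_closure (hfK hx)) h1 h2 h3
        rw [hKcl.frontier_eq] at hy
        exact hy.2 hyin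
      · have hzf : x + t • (y - x) ∈ frontier K := by
          rw [hKcl.frontier_eq]; exact ⟨hz, hzi⟩
        have hzx : x ≠ x + t • (y - x) := by
          intro he
          have : t • (y - x) = 0 := by
            have := he.symm
            rwa [add_eq_left] at this
          rcases smul_eq_zero.1 this with h' | h'
          · linarith
          · exact hyx h'
        have hzy : y ≠ x + t • (y - x) := by
          intro he
          have h6 : y - x = t • (y - x) := by
            have := congrArg (fun p => p - x) he
            simpa using this
          have h5 : (1 - t) • (y - x) = 0 := by
            rw [sub_smul, one_smul, ← h6]; abel
          rcases smul_eq_zero.1 h5 with h' | h'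
          · linarith
          · exact hyx h'
        exact hcol x y _ hx hy hzf hxy hzx hzy t rfl
  intro q₃ hq₃
  have hq₃1 : gauge K q₃ = 1 := (hg1 q₃).2 hq₃
  have hq₃0 : q₃ ≠ 0 := by
    rintro rfl
    rw [gauge_zero] at hq₃1
    norm_num at hq₃1

  -- direction functional
  set f : ℝ × ℝ → ℝ := fun p => p.1 * q₃.2 - p.2 * q₃.1 with hfdef
  have hpar : ∀ u : ℝ × ℝ, u.1 * q₃.2 - u.2 * q₃.1 = 0 → ∃ t : ℝ, u = t • q₃ := by
    intro u hu
    have hq : q₃.1 ≠ 0 ∨ q₃.2 ≠ 0 := by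
      by_contra hcon
      push_neg at hcon
      exact hq₃0 (Prod.ext hcon.1 hcon.2)
    rcases hq with h | h
    · refine ⟨u.1 / q₃.1, Prod.ext ?_ ?_⟩
      · simp only [Prod.smul_fst, smul_eq_mul]
        field_simp
      · simp only [Prod.smul_snd, smul_eq_mul]
        field_simp
        linarith [hu]
    · refine ⟨u.2 / q₃.2, Prod.ext ?_ ?_⟩
      · simp only [Prod.smul_fst, smul_eq_mul]
        field_simp
        linarith [hu]
      · simp only [Prod.smul_snd, smul_eq_mul]
        field_simp
  -- two solutions with parallel chords coincide
  have hsolpar : ∀ a b : ℝ × ℝ, a ∈ frontier K → a + q₃ ∈ frontier K →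
      b ∈ frontier K → b + q₃ ∈ frontier K → f b = f a → b = a := by
    intro a b ha ha' hb hb' hfab
    have hfz : (b - a).1 * q₃.2 - (b - a).2 * q₃.1 = 0 := by
      simp only [hfdef] at hfab
      simp only [Prod.fst_sub, Prod.snd_sub]
      linarith [hfab]
    obtain ⟨t, ht⟩ := hpar _ hfz
    have htb : b = a + t • q₃ := by rw [← ht]; abel
    rcases hline a q₃ hq₃0 b ⟨hb, t, htb⟩ a ⟨ha, 0, by simp⟩
      (a + q₃) ⟨ha', 1, by rw [one_smul]⟩ with h | h | h
    · exact h
    · exfalso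
      have h2 : a + (2:ℝ) • q₃ ∈ frontier K := by
        have he : b + q₃ = a + (2:ℝ) • q₃ := by rw [h, two_smul]; abel
        rwa [he] at hb'
      refine hcol a (a + q₃) (a + (2:ℝ) • q₃) ha ha' h2 ?_ ?_ ?_ 2 ?_
      · exact fun he => hq₃0 (left_eq_add.1 he)
      · exact fun he => smul_ne_zero (two_ne_zero) hq₃0 (left_eq_add.1 he)
      · intro he
        have h3 : q₃ = (2:ℝ) • q₃ := add_left_cancel he
        rw [two_smul] at h3
        exact hq₃0 (left_eq_add.1 h3)
      · rw [add_sub_cancel_left]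
    · exfalso
      exact hq₃0 (left_eq_add.1 h)
  -- no three solutions on pairwise distinct parallel lines
  have hmid : ∀ x y z : ℝ × ℝ, x ∈ frontier K → x + q₃ ∈ frontier K →
      y ∈ frontier K → y + q₃ ∈ frontier K → z ∈ frontier K → z + q₃ ∈ frontier K →
      f x < f y → f y < f z → False := by
    intro x y z hx hx' hy hy' hz hz' h1 h2
    set α : ℝ := (f z - f y) / (f z - f x) with hα
    have hzx : 0 < f z - f x := by linarith
    have hα0 : 0 < α := div_pos (by linarith) hzx
    have hα1 : α < 1 := (div_lt_one hzx).2 (by linarith)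
    set y' : ℝ × ℝ := α • x + (1 - α) • z with hy'def
    have hfy' : f y' = f y := by
      have hcomb : α * f x + (1 - α) * f z = f y := by
        rw [hα]
        field_simp
        ring
      calc f y' = α * f x + (1 - α) * f z := by
            simp only [hy'def, hfdef, Prod.fst_add, Prod.snd_add, Prod.smul_fst,
              Prod.smul_snd, smul_eq_mul]
            ring
        _ = f y := hcomb
    have hfz2 : (y' - y).1 * q₃.2 - (y' - y).2 * q₃.1 = 0 := by
      simp only [hfdef] at hfy'
      simp only [Prod.fst_sub, Prod.snd_sub]
      linarith [hfy']
    obtain ⟨t, ht⟩ := hpar _ hfz2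
    have hty : y' = y + t • q₃ := by rw [← ht]; abel
    have hy'K : y' ∈ K := hKconv (hfK hx) (hfK hz) hα0.le (by linarith) (by ring)
    have hy'K2 : y' + q₃ ∈ K := by
      have he : α • (x + q₃) + (1 - α) • (z + q₃) = y' + q₃ := by
        calc α • (x + q₃) + (1 - α) • (z + q₃)
            = (α • x + (1 - α) • z) + (α + (1 - α)) • q₃ := by
              rw [add_smul, smul_add, smul_add]; abel
          _ = y' + q₃ := by rw [← hy'def]; norm_num
      rw [← he]
      exact hKconv (hfK hx') (hfK hz') hα0.le (by linarith) (by ring)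
    have hyy' : y ≠ y + q₃ := fun he => hq₃0 (left_eq_add.1 he)
    have c1 := hchord y (y + q₃) hy hy' hyy' t (by
      rw [show (y + q₃) - y = q₃ from add_sub_cancel_left y q₃, ← hty]
      exact hy'K)
    have c2 := hchord y (y + q₃) hy hy' hyy' (t + 1) (by
      rw [show (y + q₃) - y = q₃ from add_sub_cancel_left y q₃]
      have he : y + (t + 1) • q₃ = y' + q₃ := by
        rw [hty, add_smul, one_smul]; abel
      rw [he]
      exact hy'K2)
    have ht0 : t = 0 := by linarith [c1.1, c2.2]
    have hyeq : y = x + (1 - α) • (z - x) := by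
      have hyy : y' = y := by rw [hty, ht0]; simp
      rw [← hyy, hy'def]
      module
    have hxz : x ≠ z := fun he => by rw [he] at h1; linarith
    have hxy : x ≠ y := fun he => by rw [he] at h1; linarith
    have hzy : z ≠ y := fun he => by rw [he] at h2; linarith
    exact hcol x z y hx hz hy hxz hxy hzy (1 - α) hyeq
  -- existence of a chord of direction q₃ between frontier points
  obtain ⟨q, hqf, hq'f⟩ : ∃ q : ℝ × ℝ, q ∈ frontier K ∧ q + q₃ ∈ frontier K := by
    set c : ℝ → ℝ := fun t => Real.cos (t * Real.pi) with hcdef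
    set s : ℝ → ℝ := fun t => Real.sin (t * Real.pi) with hsdef
    set w : ℝ → ℝ × ℝ := fun t =>
      (c t * (-q₃.1) - s t * (-q₃.2), s t * (-q₃.1) + c t * (-q₃.2)) with hwdef
    have hw0 : w 0 = -q₃ := by
      simp [hwdef, hcdef, hsdef, Prod.ext_iff]
    have hw1 : w 1 = q₃ := by
      simp [hwdef, hcdef, hsdef, Prod.ext_iff]
    have hwne : ∀ t, w t ≠ 0 := by
      intro t hwt
      have h1 : c t * (-q₃.1) - s t * (-q₃.2) = 0 := by
        have := congrArg Prod.fst hwt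
        simpa [hwdef] using this
      have h2 : s t * (-q₃.1) + c t * (-q₃.2) = 0 := by
        have := congrArg Prod.snd hwt
        simpa [hwdef] using this
      have hcs : s t ^ 2 + c t ^ 2 = 1 := Real.sin_sq_add_cos_sq (t * Real.pi)
      apply hq₃0
      have e1 : q₃.1 = 0 := by
        linear_combination (-(c t)) * h1 + (-(s t)) * h2 + (-q₃.1) * hcs
      have e2 : q₃.2 = 0 := by
        linear_combination (s t) * h1 + (-(c t)) * h2 + (-q₃.2) * hcs
      exact Prod.ext e1 e2
    have hwc : Continuous w := by
      rw [hwdef]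
      fun_prop
    set p : ℝ → ℝ × ℝ := fun t => (gauge K (w t))⁻¹ • w t with hpdef
    have hgwpos : ∀ t, 0 < gauge K (w t) := fun t => hgpos _ (hwne t)
    have hpc : Continuous p := ((hgc.comp hwc).inv₀ fun t => (hgwpos t).ne').smul hwc
    have hpγ : ∀ t, p t ∈ frontier K := by
      intro t
      apply (hg1 _).1
      rw [hpdef]
      simp only
      rw [gauge_smul_of_nonneg (inv_nonneg.2 (hgwpos t).le), smul_eq_mul,
        inv_mul_cancel₀ (hgwpos t).ne']
    have hp0 : p 0 = -q₃ := by
      rw [hpdef]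
      simp only
      rw [hw0, hgneg, hq₃1]
      simp
    have hp1 : p 1 = q₃ := by
      rw [hpdef]
      simp only
      rw [hw1, hq₃1]
      simp
    have hφc : Continuous fun t => gauge K (p t + q₃) := hgc.comp (hpc.add continuous_const)
    have hφ0 : gauge K (p 0 + q₃) = 0 := by
      rw [hp0]
      simp [gauge_zero]
    have hφ1 : gauge K (p 1 + q₃) = 2 := by
      rw [hp1, show q₃ + q₃ = (2:ℝ) • q₃ from (two_smul ℝ q₃).symm,
        gauge_smul_of_nonneg (by norm_num : (0:ℝ) ≤ 2), smul_eq_mul, hq₃1]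
      norm_num
    have hIVT := intermediate_value_Icc (by norm_num : (0:ℝ) ≤ 1) hφc.continuousOn
    have h1m : (1:ℝ) ∈ Set.Icc (gauge K (p 0 + q₃)) (gauge K (p 1 + q₃)) := by
      rw [hφ0, hφ1]
      norm_num
    obtain ⟨t, _, htv⟩ := hIVT h1m
    exact ⟨p t, hpγ t, (hg1 _).1 htv⟩
  -- assemble the unique pair
  have hq₂f : -(q + q₃) ∈ frontier K := hfneg _ hq'f
  have hgq : gauge K q = 1 := (hg1 q).2 hqf
  have hqne : q ≠ -(q + q₃) := by
    intro he
    have h3 : -q = q + q₃ := by conv_lhs => rw [he, neg_neg]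
    have h2q : q₃ = -q - q := by rw [h3]; abel
    have : gauge K (-q - q) = 1 := by rw [← h2q]; exact hq₃1
    rw [show -q - q = -(q + q) by abel, hgneg,
      show q + q = (2:ℝ) • q from (two_smul ℝ q).symm,
      gauge_smul_of_nonneg (by norm_num : (0:ℝ) ≤ 2), smul_eq_mul, hgq] at this
    norm_num at this
  have hq2' : -(q + q₃) + q₃ ∈ frontier K := by
    rw [show -(q + q₃) + q₃ = -q by abel]
    exact hfneg _ hqf
  refine ⟨{q, -(q + q₃)}, ⟨q, -(q + q₃), hqne, hqf, hq₂f, by abel, rfl⟩, ?_⟩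
  rintro P ⟨p₁, p₂, hpne, hp₁, hp₂, hsum, rfl⟩
  have hp₂eq : p₂ = -(p₁ + q₃) := by
    have h5 : p₂ + (p₁ + q₃) = 0 := by rw [← hsum]; abel
    exact eq_neg_of_add_eq_zero_left h5
  have hp₁' : p₁ + q₃ ∈ frontier K := by
    have h6 := hfneg _ hp₂
    rwa [hp₂eq, neg_neg] at h6
  by_cases h1 : f p₁ = f q
  · have he : p₁ = q := hsolpar q p₁ hqf hq'f hp₁ hp₁' h1
    rw [he] at hp₂eq
    rw [he, hp₂eq]
  · by_cases h2 : f p₁ = f (-(q + q₃))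
    · have he : p₁ = -(q + q₃) := hsolpar (-(q + q₃)) p₁ hq₂f hq2' hp₁ hp₁' h2
      have hp₂q : p₂ = q := by
        rw [hp₂eq, he]
        abel
      rw [he, hp₂q]
      exact Set.pair_comm _ _
    · exfalso
      have hfqq : f q ≠ f (-(q + q₃)) := by
        intro he
        have h7 : -(q + q₃) = q := hsolpar q (-(q + q₃)) hqf hq'f hq₂f hq2' he.symm
        exact hqne h7.symm
      rcases lt_trichotomy (f q) (f (-(q + q₃))) with hAB | hAB | hAB
      · rcases lt_trichotomy (f p₁) (f q) with hC | hC | hC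
        · exact hmid p₁ q (-(q + q₃)) hp₁ hp₁' hqf hq'f hq₂f hq2' hC hAB
        · exact h1 hC
        · rcases lt_trichotomy (f p₁) (f (-(q + q₃))) with hC2 | hC2 | hC2
          · exact hmid q p₁ (-(q + q₃)) hqf hq'f hp₁ hp₁' hq₂f hq2' hC hC2
          · exact h2 hC2
          · exact hmid q (-(q + q₃)) p₁ hqf hq'f hq₂f hq2' hp₁ hp₁' hAB hC2
      · exact hfqq hAB
      · rcases lt_trichotomy (f p₁) (f (-(q + q₃))) with hC | hC | hC
        · exact hmid p₁ (-(q + q₃)) q hp₁ hp₁' hq₂f hq2' hqf hq'f hC hAB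
        · exact h2 hC
        · rcases lt_trichotomy (f p₁) (f q) with hC2 | hC2 | hC2
          · exact hmid (-(q + q₃)) p₁ q hq₂f hq2' hp₁ hp₁' hqf hq'f hC hC2
          · exact h1 hC2
          · exact hmid (-(q + q₃)) q p₁ hq₂f hq2' hqf hq'f hp₁ hp₁' hAB hC2
end

section
/- Let ω > 0, a, b > 0, q(t) = (a cos(ωt), b sin(ωt)), and qᵢ(t) = q(t + 2π(i-1)/(3ω)) for i = 1,2,3. Then each qᵢ satisfies the coupled harmonic equations d²qᵢ/dt² = (ω²/3) Σ_{j≠i} (qⱼ - qᵢ), i.e. the motion is a solution of the equal-mass three-body problem with pairwise potential U(r) = (ω²/6) r². -/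
open Real

lemma dcos (a ω c t : ℝ) : HasDerivAt (fun t => a * cos (ω * (t + c))) (-(a * ω) * sin (ω * (t + c))) t := by
  have h : HasDerivAt (fun t : ℝ => ω * (t + c)) ω t := by
    simpa using (((hasDerivAt_id t).add_const c).const_mul ω)
  have := h.cos.const_mul a
  exact this.congr_deriv (by ring)

lemma dsin (b ω c t : ℝ) : HasDerivAt (fun t => b * sin (ω * (t + c))) (b * ω * cos (ω * (t + c))) t := by
  have h : HasDerivAt (fun t : ℝ => ω * (t + c)) ω t := by
    simpa using (((hasDerivAt_id t).add_const c).const_mul ω)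
  have := h.sin.const_mul b
  exact this.congr_deriv (by ring)

lemma dd (a b ω c t : ℝ) :
    deriv (deriv (fun t => ((a * cos (ω * (t + c)), b * sin (ω * (t + c))) : ℝ × ℝ))) t
      = -(ω ^ 2) • ((a * cos (ω * (t + c)), b * sin (ω * (t + c))) : ℝ × ℝ) := by
  have h1 : deriv (fun t => ((a * cos (ω * (t + c)), b * sin (ω * (t + c))) : ℝ × ℝ))
      = fun t => ((-(a * ω) * sin (ω * (t + c)), b * ω * cos (ω * (t + c))) : ℝ × ℝ) := by
    funext s; exact (HasDerivAt.prodMk (dcos a ω c s) (dsin b ω c s)).deriv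
  rw [h1]
  have h2 := (HasDerivAt.prodMk (dsin (-(a*ω)) ω c t) (dcos (b*ω) ω c t)).deriv
  rw [h2]
  simp [Prod.smul_mk]
  constructor <;> ring

lemma tricos (x : ℝ) : cos x + (cos (x + 2 * π / 3) + cos (x + 2 * π * 2 / 3)) = 0 := by
  have h1 : x + 2 * π / 3 = x + π - π / 3 := by ring
  have h2 : x + 2 * π * 2 / 3 = x + π + π / 3 := by ring
  rw [h1, h2, cos_add, cos_sub, cos_add, cos_pi, sin_pi, cos_pi_div_three]
  ring

lemma trisin (x : ℝ) : sin x + (sin (x + 2 * π / 3) + sin (x + 2 * π * 2 / 3)) = 0 := by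
  have h1 : x + 2 * π / 3 = x + π - π / 3 := by ring
  have h2 : x + 2 * π * 2 / 3 = x + π + π / 3 := by ring
  rw [h1, h2, sin_add, sin_sub, sin_add, cos_pi, sin_pi, cos_pi_div_three]
  ring

/-- The choreography on the ellipse satisfies the coupled harmonic equations
`d²qᵢ/dt² = (ω²/3) Σ_{j≠i} (qⱼ - qᵢ)`, i.e. it solves the equal-mass three-body
problem with pairwise potential `U(r) = (ω²/6) r²`. -/
theorem stmt10 (ω a b : ℝ) (hω : 0 < ω) (ha : 0 < a) (hb : 0 < b)
    (q : ℝ → ℝ × ℝ) (hq : q = fun t => (a * cos (ω * t), b * sin (ω * t)))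
    (Q : Fin 3 → ℝ → ℝ × ℝ) (hQ : Q = fun i t => q (t + 2 * π * ((i : Fin 3) : ℕ) / (3 * ω))) :
    ∀ i, ∀ t : ℝ,
      deriv (deriv (Q i)) t = (ω ^ 2 / 3) • ∑ j ∈ Finset.univ.erase i, (Q j t - Q i t) := by
  subst hq hQ
  intro i t
  set c : Fin 3 → ℝ := fun i => 2 * π * ((i : Fin 3) : ℕ) / (3 * ω) with hc
  have hQ' : ∀ j : Fin 3, ∀ s : ℝ,
      (fun t => ((a * cos (ω * (t + 2 * π * ((j : Fin 3) : ℕ) / (3 * ω))),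
        b * sin (ω * (t + 2 * π * ((j : Fin 3) : ℕ) / (3 * ω)))) : ℝ × ℝ)) s
      = (a * cos (ω * (s + c j)), b * sin (ω * (s + c j))) := fun j s => rfl
  -- sum identity: Q 0 + Q 1 + Q 2 = 0
  have hsum : ∑ j : Fin 3, ((a * cos (ω * (t + c j)), b * sin (ω * (t + c j))) : ℝ × ℝ) = 0 := by
    rw [Fin.sum_univ_three]
    have e : ∀ j : Fin 3, ω * (t + c j) = ω * t + ω * c j := fun j => by ring
    have c0 : ω * c (0 : Fin 3) = 0 := by simp [hc]
    have c1 : ω * c (1 : Fin 3) = 2 * π / 3 := by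
      simp [hc]; field_simp
    have c2 : ω * c (2 : Fin 3) = 2 * π * 2 / 3 := by
      simp [hc]; field_simp
    ext
    · simp only [e, c0, c1, c2, Prod.fst_add, Prod.fst_zero, add_zero]
      linear_combination a * tricos (ω * t)
    · simp only [e, c0, c1, c2, Prod.snd_add, Prod.snd_zero, add_zero]
      linear_combination b * trisin (ω * t)
  have hLHS : deriv (deriv (fun t => ((a * cos (ω * t), b * sin (ω * t)) : ℝ × ℝ)) ∘ (fun t => t)) = deriv (deriv (fun t => ((a * cos (ω * t), b * sin (ω * t)) : ℝ × ℝ))) := rfl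
  have hQi : (fun t => ((fun t => ((a * cos (ω * t), b * sin (ω * t)) : ℝ × ℝ)) (t + 2 * π * ((i : Fin 3) : ℕ) / (3 * ω)))) = fun t => ((a * cos (ω * (t + c i)), b * sin (ω * (t + c i))) : ℝ × ℝ) := rfl
  show deriv (deriv fun t => ((fun t => ((a * cos (ω * t), b * sin (ω * t)) : ℝ × ℝ)) (t + 2 * π * ((i : Fin 3) : ℕ) / (3 * ω)))) t = _
  rw [hQi, dd a b ω (c i) t]
  rw [Finset.sum_erase_eq_sub (Finset.mem_univ i)]
  have hsub : ∑ j : Fin 3, (((fun i t => ((fun t => ((a * cos (ω * t), b * sin (ω * t)) : ℝ × ℝ)) (t + 2 * π * ((i : Fin 3) : ℕ) / (3 * ω))) : Fin 3 → ℝ → ℝ × ℝ) j t)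
      - ((fun i t => ((fun t => ((a * cos (ω * t), b * sin (ω * t)) : ℝ × ℝ)) (t + 2 * π * ((i : Fin 3) : ℕ) / (3 * ω))) : Fin 3 → ℝ → ℝ × ℝ) i t))
      = ∑ j : Fin 3, (((a * cos (ω * (t + c j)), b * sin (ω * (t + c j))) : ℝ × ℝ) - (a * cos (ω * (t + c i)), b * sin (ω * (t + c i)))) := rfl
  rw [hsub, Finset.sum_sub_distrib, hsum, Finset.sum_const]
  simp only [Finset.card_univ, Fintype.card_fin]
  show _ = (ω ^ 2 / 3) • ((0 : ℝ × ℝ) - (3 : ℕ) • ((a * cos (ω * (t + c i)), b * sin (ω * (t + c i))) : ℝ × ℝ)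
    - (((a * cos (ω * (t + c i)), b * sin (ω * (t + c i))) : ℝ × ℝ) - (a * cos (ω * (t + c i)), b * sin (ω * (t + c i)))))
  ext <;> simp <;> ring
end

section
/- Let f : [0,1] → ℝ be C³ with f(0) = f(1) = 0, f > 0, f'' < 0, f''' < 0 on (0,1), f'(0) > 0 finite, and let a₀ ∈ (0,1) satisfy f'(a₀) = -f'(0). For a ∈ (0,1], set g(x,a) = f(-x) - f(x+a) + f(a) for x ∈ (-a, 0). Then: if 0 < a ≤ a₀, the equation g(x,a) = 0 has no solution in (-a,0); if a₀ < a < 1, it has exactly one solution x₀(a), which lies in (-a/2, 0); and if a = 1, the unique solution is x = -1/2. -/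
open Set

private lemma aux_anti (u u' : ℝ → ℝ)
    (hu : ∀ x ∈ Icc (0 : ℝ) 1, HasDerivWithinAt u (u' x) (Icc 0 1) x)
    (hneg : ∀ x ∈ Ioo (0 : ℝ) 1, u' x < 0) : StrictAntiOn u (Icc 0 1) := by
  apply strictAntiOn_of_deriv_neg (convex_Icc 0 1)
    (fun x hx => (hu x hx).continuousWithinAt)
  rw [interior_Icc]
  intro x hx
  rw [((hu x (Ioo_subset_Icc_self hx)).hasDerivAt (Icc_mem_nhds hx.1 hx.2)).deriv]
  exact hneg x hx

private lemma aux_deriv (f f' : ℝ → ℝ) (a : ℝ) (ha : 0 < a) (ha1 : a ≤ 1)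
    (hf' : ∀ x ∈ Icc (0 : ℝ) 1, HasDerivWithinAt f (f' x) (Icc 0 1) x) :
    ∀ x ∈ Icc (-a) (0:ℝ), HasDerivWithinAt (fun y => f (-y) - f (y + a) + f a)
      (-f' (-x) - f' (x + a)) (Icc (-a) 0) x := by
  intro x hx
  obtain ⟨hx1, hx2⟩ := hx
  have hm1 : (-x) ∈ Icc (0:ℝ) 1 := ⟨by linarith, by linarith⟩
  have hm2 : (x + a) ∈ Icc (0:ℝ) 1 := ⟨by linarith, by linarith⟩
  have i1 : HasDerivWithinAt (fun y : ℝ => -y) (-1) (Icc (-a) 0) x :=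
    (hasDerivWithinAt_id x _).neg
  have i2 : HasDerivWithinAt (fun y : ℝ => y + a) 1 (Icc (-a) 0) x :=
    (hasDerivWithinAt_id x _).add_const a
  have m1 : MapsTo (fun y : ℝ => -y) (Icc (-a) 0) (Icc 0 1) := by
    intro y hy; simp only [mem_Icc] at hy ⊢; constructor <;> linarith
  have m2 : MapsTo (fun y : ℝ => y + a) (Icc (-a) 0) (Icc 0 1) := by
    intro y hy; simp only [mem_Icc] at hy ⊢; constructor <;> linarith
  have c1 := HasDerivWithinAt.comp x (hf' (-x) hm1) i1 m1
  have c2 := HasDerivWithinAt.comp x (hf' (x + a) hm2) i2 m2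
  have := (c1.sub c2).add_const (f a)
  convert this using 1
  · rfl
  · rfl
  · rfl
  · ring

private lemma aux_deriv2 (f' f'' : ℝ → ℝ) (a : ℝ) (ha : 0 < a) (ha1 : a ≤ 1)
    (hf'' : ∀ x ∈ Icc (0 : ℝ) 1, HasDerivWithinAt f' (f'' x) (Icc 0 1) x) :
    ∀ x ∈ Icc (-a) (0:ℝ), HasDerivWithinAt (fun y => -f' (-y) - f' (y + a))
      (f'' (-x) - f'' (x + a)) (Icc (-a) 0) x := by
  intro x hx
  obtain ⟨hx1, hx2⟩ := hx
  have hm1 : (-x) ∈ Icc (0:ℝ) 1 := ⟨by linarith, by linarith⟩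
  have hm2 : (x + a) ∈ Icc (0:ℝ) 1 := ⟨by linarith, by linarith⟩
  have i1 : HasDerivWithinAt (fun y : ℝ => -y) (-1) (Icc (-a) 0) x :=
    (hasDerivWithinAt_id x _).neg
  have i2 : HasDerivWithinAt (fun y : ℝ => y + a) 1 (Icc (-a) 0) x :=
    (hasDerivWithinAt_id x _).add_const a
  have m1 : MapsTo (fun y : ℝ => -y) (Icc (-a) 0) (Icc 0 1) := by
    intro y hy; simp only [mem_Icc] at hy ⊢; constructor <;> linarith
  have m2 : MapsTo (fun y : ℝ => y + a) (Icc (-a) 0) (Icc 0 1) := by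
    intro y hy; simp only [mem_Icc] at hy ⊢; constructor <;> linarith
  have c1 := HasDerivWithinAt.comp x (hf'' (-x) hm1) i1 m1
  have c2 := HasDerivWithinAt.comp x (hf'' (x + a) hm2) i2 m2
  have := (c1.neg.sub c2)
  convert this using 1
  · rfl
  · rfl
  · rfl
  · ring

private lemma aux_key (f f' f'' f''' : ℝ → ℝ)
    (hf' : ∀ x ∈ Icc (0 : ℝ) 1, HasDerivWithinAt f (f' x) (Icc 0 1) x)
    (hf'' : ∀ x ∈ Icc (0 : ℝ) 1, HasDerivWithinAt f' (f'' x) (Icc 0 1) x)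
    (hf''' : ∀ x ∈ Icc (0 : ℝ) 1, HasDerivWithinAt f'' (f''' x) (Icc 0 1) x)
    (h0 : f 0 = 0) (h1 : f 1 = 0)
    (hpos : ∀ x ∈ Ioo (0 : ℝ) 1, 0 < f x)
    (h3neg : ∀ x ∈ Ioo (0 : ℝ) 1, f''' x < 0)
    (a : ℝ) (ha : 0 < a) (ha1 : a ≤ 1) :
    (∀ y ∈ Ioo (-(a/2)) (0:ℝ), f (-y) - f (y + a) + f a < f a) ∧
    (∀ x ∈ Ioo (-a) (-(a/2)), f a < f (-x) - f (x + a) + f a) ∧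
    StrictMonoOn (fun y => -f' (-y) - f' (y + a)) (Icc (-(a/2)) 0) := by
  have hfa0 : 0 ≤ f a := by
    rcases lt_or_eq_of_le ha1 with h | h
    · exact (hpos a ⟨ha, h⟩).le
    · rw [h, h1]
  have hG' := aux_deriv f f' a ha ha1 hf'
  have hG'' := aux_deriv2 f' f'' a ha ha1 hf''
  have contG : ContinuousOn (fun y => f (-y) - f (y + a) + f a) (Icc (-a) 0) :=
    fun x hx => (hG' x hx).continuousWithinAt
  have contG' : ContinuousOn (fun y => -f' (-y) - f' (y + a)) (Icc (-a) 0) :=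
    fun x hx => (hG'' x hx).continuousWithinAt
  have hderivG : ∀ x ∈ Ioo (-a) (0:ℝ),
      HasDerivAt (fun y => f (-y) - f (y + a) + f a) (-f' (-x) - f' (x + a)) x :=
    fun x hx => (hG' x (Ioo_subset_Icc_self hx)).hasDerivAt (Icc_mem_nhds hx.1 hx.2)
  have hderivG' : ∀ x ∈ Ioo (-a) (0:ℝ),
      HasDerivAt (fun y => -f' (-y) - f' (y + a)) (f'' (-x) - f'' (x + a)) x :=
    fun x hx => (hG'' x (Ioo_subset_Icc_self hx)).hasDerivAt (Icc_mem_nhds hx.1 hx.2)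
  have f''anti : StrictAntiOn f'' (Icc 0 1) := aux_anti f'' f''' hf''' h3neg
  -- G'' > 0 on Ioo (-(a/2)) 0
  have hG''pos : ∀ x ∈ Ioo (-(a/2)) (0:ℝ), 0 < f'' (-x) - f'' (x + a) := by
    intro x hx
    obtain ⟨hx1, hx2⟩ := hx
    have h1' : (-x) ∈ Icc (0:ℝ) 1 := ⟨by linarith, by linarith⟩
    have h2' : (x + a) ∈ Icc (0:ℝ) 1 := ⟨by linarith, by linarith⟩
    have := f''anti h1' h2' (by linarith)
    linarith
  -- G' strictly monotone on Icc (-(a/2)) 0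
  have M : StrictMonoOn (fun y => -f' (-y) - f' (y + a)) (Icc (-(a/2)) 0) := by
    apply strictMonoOn_of_deriv_pos (convex_Icc _ _)
      (contG'.mono (Icc_subset_Icc (by linarith) le_rfl))
    rw [interior_Icc]
    intro x hx
    rw [(hderivG' x ⟨by linarith [hx.1], hx.2⟩).deriv]
    exact hG''pos x hx
  have hG0 : f (-(0:ℝ)) - f (0 + a) + f a = 0 := by
    rw [neg_zero, zero_add, h0]; ring
  have hGhalf : f (-(-(a/2))) - f (-(a/2) + a) + f a = f a := by
    have e1 : -(-(a/2)) = a/2 := by ring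
    have e2 : -(a/2) + a = a/2 := by ring
    rw [e1, e2]; ring
  have B : ∀ y ∈ Ioo (-(a/2)) (0:ℝ), f (-y) - f (y + a) + f a < f a := by
    intro y hy
    obtain ⟨hy1, hy2⟩ := hy
    by_cases hy' : 0 ≤ -f' (-y) - f' (y + a)
    · -- G strictly increasing on [y, 0], so G y < G 0 = 0 ≤ f a
      have mono : StrictMonoOn (fun t => f (-t) - f (t + a) + f a) (Icc y 0) := by
        apply strictMonoOn_of_deriv_pos (convex_Icc _ _)
          (contG.mono (Icc_subset_Icc (by linarith) le_rfl))
        rw [interior_Icc]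
        intro t ht
        rw [(hderivG t ⟨by linarith [ht.1], ht.2⟩).deriv]
        have hlt : -f' (-y) - f' (y + a) < -f' (-t) - f' (t + a) :=
          M ⟨hy1.le, hy2.le⟩ ⟨by linarith [ht.1], ht.2.le⟩ ht.1
        linarith
      have hc : f (-y) - f (y + a) + f a < f (-(0:ℝ)) - f (0 + a) + f a :=
        mono ⟨le_rfl, hy2.le⟩ ⟨hy2.le, le_rfl⟩ hy2
      linarith
    · push_neg at hy'
      -- G strictly decreasing on [-(a/2), y], so G y < G (-(a/2)) = f a
      have anti : StrictAntiOn (fun t => f (-t) - f (t + a) + f a) (Icc (-(a/2)) y) := by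
        apply strictAntiOn_of_deriv_neg (convex_Icc _ _)
          (contG.mono (Icc_subset_Icc (by linarith) (by linarith)))
        rw [interior_Icc]
        intro t ht
        rw [(hderivG t ⟨by linarith [ht.1], by linarith [ht.2]⟩).deriv]
        have hlt : -f' (-t) - f' (t + a) < -f' (-y) - f' (y + a) :=
          M ⟨by linarith [ht.1], by linarith [ht.2]⟩ ⟨hy1.le, hy2.le⟩ ht.2
        linarith
      have hc : f (-y) - f (y + a) + f a < f (-(-(a/2))) - f (-(a/2) + a) + f a :=
        anti ⟨le_rfl, hy1.le⟩ ⟨hy1.le, le_rfl⟩ hy1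
      linarith
  refine ⟨B, ?_, M⟩
  intro x hx
  have hB := B (-a - x) ⟨by linarith [hx.2], by linarith [hx.1]⟩
  have e1 : -(-a - x) = x + a := by ring
  have e2 : -a - x + a = -x := by ring
  rw [e1, e2] at hB
  linarith

/-- Zeros of `g(x,a) = f(-x) - f(x+a) + f(a)` on `(-a, 0)`: none for `0 < a ≤ a₀`;
exactly one, lying in `(-a/2, 0)`, for `a₀ < a < 1`; and exactly `x = -1/2` for
`a = 1`. Here `a₀ ∈ (0,1)` is defined by `f'(a₀) = -f'(0)`. -/
theorem stmt16 (f f' f'' f''' : ℝ → ℝ)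
    (hf' : ∀ x ∈ Icc (0 : ℝ) 1, HasDerivWithinAt f (f' x) (Icc 0 1) x)
    (hf'' : ∀ x ∈ Icc (0 : ℝ) 1, HasDerivWithinAt f' (f'' x) (Icc 0 1) x)
    (hf''' : ∀ x ∈ Icc (0 : ℝ) 1, HasDerivWithinAt f'' (f''' x) (Icc 0 1) x)
    (h0 : f 0 = 0) (h1 : f 1 = 0)
    (hpos : ∀ x ∈ Ioo (0 : ℝ) 1, 0 < f x)
    (hconc : ∀ x ∈ Ioo (0 : ℝ) 1, f'' x < 0)
    (h3neg : ∀ x ∈ Ioo (0 : ℝ) 1, f''' x < 0)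
    (hf'0 : 0 < f' 0)
    (a₀ : ℝ) (ha₀ : a₀ ∈ Ioo (0 : ℝ) 1) (ha₀' : f' a₀ = -f' 0)
    (g : ℝ → ℝ → ℝ) (hgdef : g = fun x a => f (-x) - f (x + a) + f a) :
    (∀ a, 0 < a → a ≤ a₀ → ∀ x ∈ Ioo (-a) (0 : ℝ), g x a ≠ 0) ∧
    (∀ a, a₀ < a → a < 1 →
      (∃! x, x ∈ Ioo (-a) (0 : ℝ) ∧ g x a = 0) ∧
      (∀ x ∈ Ioo (-a) (0 : ℝ), g x a = 0 → x ∈ Ioo (-a / 2) 0)) ∧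
    (∀ x ∈ Ioo (-1 : ℝ) 0, (g x 1 = 0 ↔ x = -(1 / 2))) := by
  subst hgdef
  have f'anti : StrictAntiOn f' (Icc 0 1) := aux_anti f' f'' hf'' hconc
  refine ⟨?_, ?_, ?_⟩
  · -- Part 1 : no zero for 0 < a ≤ a₀
    intro a ha haa₀ x hx hzero
    have ha1 : a < 1 := lt_of_le_of_lt haa₀ ha₀.2
    obtain ⟨B, C, M⟩ := aux_key f f' f'' f''' hf' hf'' hf''' h0 h1 hpos h3neg a ha ha1.le
    have hfa : 0 < f a := hpos a ⟨ha, ha1⟩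
    have hz : f (-x) - f (x + a) + f a = 0 := hzero
    have hG' := aux_deriv f f' a ha ha1.le hf'
    have contG : ContinuousOn (fun y => f (-y) - f (y + a) + f a) (Icc (-a) 0) :=
      fun t ht => (hG' t ht).continuousWithinAt
    have hderivG : ∀ t ∈ Ioo (-a) (0:ℝ),
        HasDerivAt (fun y => f (-y) - f (y + a) + f a) (-f' (-t) - f' (t + a)) t :=
      fun t ht => (hG' t (Ioo_subset_Icc_self ht)).hasDerivAt (Icc_mem_nhds ht.1 ht.2)
    rcases lt_trichotomy x (-(a/2)) with h | h | h
    · have := C x ⟨hx.1, h⟩; linarith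
    · have : f (-x) - f (x + a) + f a = f a := by
        rw [h]
        have e1 : -(-(a/2)) = a/2 := by ring
        have e2 : -(a/2) + a = a/2 := by ring
        rw [e1, e2]; ring
      linarith
    · -- G strictly decreasing on [-(a/2), 0] since G' < 0 there
      have hG'0 : -f' (-(0:ℝ)) - f' (0 + a) ≤ 0 := by
        rw [neg_zero, zero_add]
        rcases eq_or_lt_of_le haa₀ with he | hlt
        · rw [he, ha₀']; linarith
        · have := f'anti ⟨ha.le, ha1.le⟩ ⟨ha₀.1.le, ha₀.2.le⟩ hlt
          rw [ha₀'] at this; linarith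
      have anti : StrictAntiOn (fun y => f (-y) - f (y + a) + f a) (Icc (-(a/2)) 0) := by
        apply strictAntiOn_of_deriv_neg (convex_Icc _ _)
          (contG.mono (Icc_subset_Icc (by linarith) le_rfl))
        rw [interior_Icc]
        intro t ht
        rw [(hderivG t ⟨by linarith [ht.1], ht.2⟩).deriv]
        have hlt : -f' (-t) - f' (t + a) < -f' (-(0:ℝ)) - f' (0 + a) :=
          M ⟨ht.1.le, ht.2.le⟩ ⟨by linarith, le_rfl⟩ ht.2
        linarith
      have hc : f (-(0:ℝ)) - f (0 + a) + f a < f (-x) - f (x + a) + f a :=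
        anti ⟨h.le, hx.2.le⟩ ⟨by linarith, le_rfl⟩ hx.2
      have hG0 : f (-(0:ℝ)) - f (0 + a) + f a = 0 := by
        rw [neg_zero, zero_add, h0]; ring
      linarith
  · -- Part 2 : a₀ < a < 1
    intro a haa₀ ha1
    have ha : 0 < a := lt_trans ha₀.1 haa₀
    obtain ⟨B, C, M⟩ := aux_key f f' f'' f''' hf' hf'' hf''' h0 h1 hpos h3neg a ha ha1.le
    have hfa : 0 < f a := hpos a ⟨ha, ha1⟩
    have hG' := aux_deriv f f' a ha ha1.le hf'
    have hG'' := aux_deriv2 f' f'' a ha ha1.le hf''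
    have contG : ContinuousOn (fun y => f (-y) - f (y + a) + f a) (Icc (-a) 0) :=
      fun t ht => (hG' t ht).continuousWithinAt
    have contG' : ContinuousOn (fun y => -f' (-y) - f' (y + a)) (Icc (-a) 0) :=
      fun t ht => (hG'' t ht).continuousWithinAt
    have hderivG : ∀ t ∈ Ioo (-a) (0:ℝ),
        HasDerivAt (fun y => f (-y) - f (y + a) + f a) (-f' (-t) - f' (t + a)) t :=
      fun t ht => (hG' t (Ioo_subset_Icc_self ht)).hasDerivAt (Icc_mem_nhds ht.1 ht.2)
    have hG0 : f (-(0:ℝ)) - f (0 + a) + f a = 0 := by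
      rw [neg_zero, zero_add, h0]; ring
    have hGhalf : f (-(-(a/2))) - f (-(a/2) + a) + f a = f a := by
      have e1 : -(-(a/2)) = a/2 := by ring
      have e2 : -(a/2) + a = a/2 := by ring
      rw [e1, e2]; ring
    have key0 : 0 < -f' (-(0:ℝ)) - f' (0 + a) := by
      rw [neg_zero, zero_add]
      have := f'anti ⟨ha₀.1.le, ha₀.2.le⟩ ⟨ha.le, ha1.le⟩ haa₀
      rw [ha₀'] at this; linarith
    -- find b ∈ (-(a/2), 0) with G' > 0 on [b, 0]
    have hcw : ContinuousWithinAt (fun y => -f' (-y) - f' (y + a)) (Icc (-a) 0) 0 :=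
      contG' 0 ⟨by linarith, le_rfl⟩
    have hev : (fun y => -f' (-y) - f' (y + a)) ⁻¹' Ioi 0 ∈ nhdsWithin (0:ℝ) (Icc (-a) 0) :=
      hcw (Ioi_mem_nhds key0)
    rw [Metric.mem_nhdsWithin_iff] at hev
    obtain ⟨ε, hε, hball⟩ := hev
    obtain ⟨b, hbε, hbhalf, hb0⟩ : ∃ b : ℝ, -(ε/2) ≤ b ∧ -(a/2) < b ∧ b < 0 := by
      refine ⟨-(min (ε/2) (a/4)), ?_, ?_, ?_⟩
      · have : min (ε/2) (a/4) ≤ ε/2 := min_le_left _ _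
        linarith
      · have : min (ε/2) (a/4) ≤ a/4 := min_le_right _ _
        linarith
      · have : 0 < min (ε/2) (a/4) := lt_min (by linarith) (by linarith)
        linarith
    have hG'pos : ∀ t ∈ Icc b (0:ℝ), 0 < -f' (-t) - f' (t + a) := by
      intro t ht
      have hbt := ht.1; have ht0 := ht.2
      have h1' : t ∈ Metric.ball (0:ℝ) ε := by
        rw [Metric.mem_ball, Real.dist_eq, sub_zero, abs_lt]
        constructor <;> linarith
      have h2' : t ∈ Icc (-a) (0:ℝ) := ⟨by linarith, ht0⟩
      exact hball ⟨h1', h2'⟩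
    -- G strictly increasing on [b, 0], so G b < G 0 = 0
    have monoB : StrictMonoOn (fun y => f (-y) - f (y + a) + f a) (Icc b 0) := by
      apply strictMonoOn_of_deriv_pos (convex_Icc _ _)
        (contG.mono (Icc_subset_Icc (by linarith) le_rfl))
      rw [interior_Icc]
      intro t ht
      rw [(hderivG t ⟨by linarith [ht.1], ht.2⟩).deriv]
      exact hG'pos t ⟨ht.1.le, ht.2.le⟩
    have hGb : f (-b) - f (b + a) + f a < 0 := by
      have hc : f (-b) - f (b + a) + f a < f (-(0:ℝ)) - f (0 + a) + f a :=
        monoB ⟨le_rfl, hb0.le⟩ ⟨hb0.le, le_rfl⟩ hb0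
      linarith
    -- IVT between -(a/2) and b
    have hivt := intermediate_value_Ioo' (by linarith : -(a/2) ≤ b)
      (contG.mono (Icc_subset_Icc (by linarith) hb0.le))
    have h0mem : (0:ℝ) ∈ Ioo (f (-b) - f (b + a) + f a)
        (f (-(-(a/2))) - f (-(a/2) + a) + f a) := by
      rw [hGhalf]; exact ⟨hGb, hfa⟩
    obtain ⟨x₀, hx₀I, hx₀⟩ := hivt h0mem
    have hx₀mem : x₀ ∈ Ioo (-a) (0:ℝ) := ⟨by linarith [hx₀I.1], by linarith [hx₀I.2]⟩
    -- every zero lies in Ioo (-(a/2)) 0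
    have zero_in : ∀ z ∈ Ioo (-a) (0:ℝ), f (-z) - f (z + a) + f a = 0 →
        z ∈ Ioo (-(a/2)) (0:ℝ) := by
      intro z hz hz0
      rcases lt_trichotomy z (-(a/2)) with h | h | h
      · exact absurd hz0 (by have := C z ⟨hz.1, h⟩; intro h'; linarith)
      · exfalso
        rw [h, hGhalf] at hz0
        linarith
      · exact ⟨h, hz.2⟩
    -- no two distinct zeros in Ioo (-(a/2)) 0 (Rolle + strict monotonicity of G')
    have no_two : ∀ z1 z2 : ℝ, z1 ∈ Ioo (-(a/2)) (0:ℝ) → z2 ∈ Ioo (-(a/2)) (0:ℝ) →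
        z1 < z2 → f (-z1) - f (z1 + a) + f a = 0 → f (-z2) - f (z2 + a) + f a = 0 →
        False := by
      intro z1 z2 h1' h2' hlt e1 e2
      obtain ⟨c, hc, hc0⟩ := exists_deriv_eq_zero hlt
        (contG.mono (Icc_subset_Icc (by linarith [h1'.1]) (by linarith [h2'.2])))
        (e1.trans e2.symm)
      obtain ⟨d, hd, hd0⟩ := exists_deriv_eq_zero h2'.2
        (contG.mono (Icc_subset_Icc (by linarith [h2'.1]) le_rfl))
        (by
          show f (-z2) - f (z2 + a) + f a = f (-(0:ℝ)) - f (0 + a) + f a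
          rw [e2, hG0])
      rw [(hderivG c ⟨by linarith [h1'.1, hc.1], by linarith [h2'.2, hc.2]⟩).deriv] at hc0
      rw [(hderivG d ⟨by linarith [h2'.1, hd.1], hd.2⟩).deriv] at hd0
      have : -f' (-c) - f' (c + a) < -f' (-d) - f' (d + a) :=
        M ⟨by linarith [h1'.1, hc.1], by linarith [h2'.2, hc.2]⟩
          ⟨by linarith [h2'.1, hd.1], hd.2.le⟩ (by linarith [hc.2, hd.1])
      rw [hc0, hd0] at this
      exact lt_irrefl 0 this
    constructor
    · refine ⟨x₀, ⟨hx₀mem, hx₀⟩, ?_⟩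
      intro z hz
      have hzmem := zero_in z hz.1 hz.2
      have hx₀mem' := zero_in x₀ hx₀mem hx₀
      rcases lt_trichotomy z x₀ with h | h | h
      · exact absurd (no_two z x₀ hzmem hx₀mem' h hz.2 hx₀) (by simp)
      · exact h
      · exact absurd (no_two x₀ z hx₀mem' hzmem h hx₀ hz.2) (by simp)
    · intro z hz hz0
      have := zero_in z hz hz0
      exact ⟨by linarith [this.1], this.2⟩
  · -- Part 3 : a = 1
    intro x hx
    obtain ⟨B, C, _⟩ := aux_key f f' f'' f''' hf' hf'' hf''' h0 h1 hpos h3neg 1 one_pos le_rfl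
    constructor
    · intro hz
      have hz' : f (-x) - f (x + 1) + f 1 = 0 := hz
      rcases lt_trichotomy x (-(1/2)) with h | h | h
      · have := C x ⟨hx.1, h⟩
        rw [h1] at this; linarith
      · exact h
      · have := B x ⟨h, hx.2⟩
        rw [h1] at this; linarith
    · intro hx'
      show f (-x) - f (x + 1) + f 1 = 0
      rw [hx']
      norm_num [h1]
end

section
/- Under the hypotheses of the previous statement, for a₀ < a ≤ 1 let x₀(a) ∈ (-a/2, 0) be the unique zero of g(·,a). Then ∂g/∂x(x₀(a), a) = -f'(-x₀(a)) - f'(x₀(a)+a) < 0, and the implicit function x₀(a) is differentiable with dx₀/da < 0 for a₀ < a ≤ 1, i.e. x₀ is strictly decreasing. -/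
open Set Filter Topology

/-- Linear extension of `f` past `1`. -/
noncomputable def Fe (f f' : ℝ → ℝ) : ℝ → ℝ :=
  fun t => if t ≤ 1 then f t else f 1 + f' 1 * (t - 1)

/-- Extension of the derivative `f'` past `1`. -/
noncomputable def Fde (f' : ℝ → ℝ) : ℝ → ℝ :=
  fun t => if t ≤ 1 then f' t else f' 1

lemma IccIic : Icc (0:ℝ) 1 ∈ 𝓝[Iic 1] (1:ℝ) := by
  rw [mem_nhdsWithin]
  exact ⟨Ioi 0, isOpen_Ioi, by norm_num, fun z hz => ⟨le_of_lt hz.1, hz.2⟩⟩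

lemma Fe_hasDerivAt (f f' : ℝ → ℝ)
    (hf' : ∀ x ∈ Icc (0:ℝ) 1, HasDerivWithinAt f (f' x) (Icc 0 1) x) :
    ∀ t ∈ Ioo (0:ℝ) 2, HasDerivAt (Fe f f') (Fde f' t) t := by
  intro t ht
  rcases lt_trichotomy t 1 with h1t | h1t | h1t
  · have hft : HasDerivAt f (f' t) t :=
      (hf' t ⟨ht.1.le, h1t.le⟩).hasDerivAt (Icc_mem_nhds ht.1 h1t)
    have hev : Fe f f' =ᶠ[𝓝 t] f := by
      filter_upwards [Iio_mem_nhds h1t] with z hz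
      exact if_pos (le_of_lt hz)
    have : HasDerivAt (Fe f f') (f' t) t := hft.congr_of_eventuallyEq hev
    rwa [show Fde f' t = f' t from if_pos h1t.le]
  · subst h1t
    have hleft : HasDerivWithinAt (Fe f f') (f' 1) (Iic 1) 1 := by
      refine ((hf' 1 (by norm_num)).mono_of_mem_nhdsWithin IccIic).congr
        (fun z hz => if_pos hz) (if_pos le_rfl)
    have hright : HasDerivWithinAt (Fe f f') (f' 1) (Ici 1) 1 := by
      have hl : HasDerivAt (fun z : ℝ => f 1 + f' 1 * (z - 1)) (f' 1) 1 := by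
        simpa using (((hasDerivAt_id (1:ℝ)).sub_const 1).const_mul (f' 1)).const_add (f 1)
      refine hl.hasDerivWithinAt.congr (fun z hz => ?_) ?_
      · rcases eq_or_lt_of_le (mem_Ici.mp hz : (1:ℝ) ≤ z) with rfl | hz'
        · show Fe f f' 1 = f 1 + f' 1 * (1 - 1)
          rw [show Fe f f' 1 = f 1 from if_pos le_rfl]; ring
        · exact if_neg (not_le.mpr hz')
      · show Fe f f' 1 = f 1 + f' 1 * (1 - 1)
        rw [show Fe f f' 1 = f 1 from if_pos le_rfl]; ring
    have h := hleft.union hright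
    rw [Iic_union_Ici, hasDerivWithinAt_univ] at h
    rwa [show Fde f' 1 = f' 1 from if_pos le_rfl]
  · have hev : Fe f f' =ᶠ[𝓝 t] (fun z => f 1 + f' 1 * (z - 1)) := by
      filter_upwards [Ioi_mem_nhds h1t] with z hz
      exact if_neg (not_le.mpr hz)
    have hl : HasDerivAt (fun z : ℝ => f 1 + f' 1 * (z - 1)) (f' 1) t := by
      simpa using (((hasDerivAt_id t).sub_const 1).const_mul (f' 1)).const_add (f 1)
    have : HasDerivAt (Fe f f') (f' 1) t := hl.congr_of_eventuallyEq hev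
    rwa [show Fde f' t = f' 1 from if_neg (not_le.mpr h1t)]

lemma Fde_continuousOn (f' f'' : ℝ → ℝ)
    (hf'' : ∀ x ∈ Icc (0:ℝ) 1, HasDerivWithinAt f' (f'' x) (Icc 0 1) x) :
    ContinuousOn (Fde f') (Ioo 0 2) := by
  intro t ht
  rcases lt_trichotomy t 1 with h1t | h1t | h1t
  · have hc : ContinuousAt f' t :=
      ((hf'' t ⟨ht.1.le, h1t.le⟩).hasDerivAt (Icc_mem_nhds ht.1 h1t)).continuousAt
    have hev : f' =ᶠ[𝓝 t] Fde f' := by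
      filter_upwards [Iio_mem_nhds h1t] with z hz
      exact (if_pos hz.le).symm
    exact (hc.congr hev).continuousWithinAt
  · subst h1t
    have hleft : ContinuousWithinAt (Fde f') (Iic 1) 1 := by
      have h1 : ContinuousWithinAt f' (Icc (0:ℝ) 1) 1 := (hf'' 1 (by norm_num)).continuousWithinAt
      have h2 : ContinuousWithinAt f' (Iic 1) 1 := h1.mono_of_mem_nhdsWithin IccIic
      exact h2.congr (fun z hz => if_pos hz) (if_pos le_rfl)
    have hright : ContinuousWithinAt (Fde f') (Ici 1) 1 := by
      refine continuousWithinAt_const.congr (fun z hz => ?_) (if_pos le_rfl)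
      rcases eq_or_lt_of_le (mem_Ici.mp hz : (1:ℝ) ≤ z) with rfl | hz'
      · exact if_pos le_rfl
      · exact if_neg (not_le.mpr hz')
    have h := hleft.union hright
    rw [Iic_union_Ici] at h
    exact h.mono (subset_univ _)
  · have hev : (fun _ : ℝ => f' 1) =ᶠ[𝓝 t] Fde f' := by
      filter_upwards [Ioi_mem_nhds h1t] with z hz
      exact (if_neg (not_le.mpr hz)).symm
    exact (continuousAt_const.congr hev).continuousWithinAt

lemma Fe_contDiffOn (f f' f'' : ℝ → ℝ)
    (hf' : ∀ x ∈ Icc (0:ℝ) 1, HasDerivWithinAt f (f' x) (Icc 0 1) x)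
    (hf'' : ∀ x ∈ Icc (0:ℝ) 1, HasDerivWithinAt f' (f'' x) (Icc 0 1) x) :
    ContDiffOn ℝ 1 (Fe f f') (Ioo 0 2) := by
  have h1 : (1 : WithTop ℕ∞) = 0 + 1 := by norm_num
  rw [h1, contDiffOn_succ_iff_deriv_of_isOpen isOpen_Ioo]
  refine ⟨fun t ht => (Fe_hasDerivAt f f' hf' t ht).differentiableAt.differentiableWithinAt,
    ?_, ?_⟩
  · intro h; simp at h
  · rw [contDiffOn_zero]
    exact (Fde_continuousOn f' f'' hf'').congr (fun t ht => (Fe_hasDerivAt f f' hf' t ht).deriv)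

/-- Scalar implicit function theorem, packaged. -/
lemma implicit_key (G : ℝ × ℝ → ℝ) (L : ℝ × ℝ →L[ℝ] ℝ) (x a gx ga : ℝ)
    (hLapp : ∀ p : ℝ × ℝ, L p = gx * p.1 + ga * p.2)
    (hgx : gx ≠ 0)
    (hGs : HasStrictFDerivAt G L (x, a))
    (hGpt : G (x, a) = 0) :
    ∃ y : ℝ → ℝ, HasDerivAt y (-(ga / gx)) a ∧ y a = x ∧
      ∀ᶠ b in 𝓝 a, G (y b, b) = 0 ∧ (y b, b) = ((fun c => y c) b, b) := by
  have hsurjL : LinearMap.range (L : ℝ × ℝ →ₗ[ℝ] ℝ) = ⊤ := by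
    rw [LinearMap.range_eq_top]
    intro c
    refine ⟨(c / gx, 0), ?_⟩
    rw [ContinuousLinearMap.coe_coe, hLapp]
    field_simp
    simp
  have hsurjS : LinearMap.range (ContinuousLinearMap.snd ℝ ℝ ℝ : ℝ × ℝ →ₗ[ℝ] ℝ) = ⊤ := by
    rw [LinearMap.range_eq_top]
    exact fun c => ⟨(0, c), rfl⟩
  have hker : IsCompl (LinearMap.ker (L : ℝ × ℝ →ₗ[ℝ] ℝ)) (LinearMap.ker (ContinuousLinearMap.snd ℝ ℝ ℝ : ℝ × ℝ →ₗ[ℝ] ℝ)) := by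
    constructor
    · rw [Submodule.disjoint_def]
      intro v hv1 hv2
      rw [LinearMap.mem_ker] at hv1 hv2
      have h2 : v.2 = 0 := hv2
      have h1 : gx * v.1 + ga * v.2 = 0 := by rw [← hLapp]; exact hv1
      rw [h2, mul_zero, add_zero] at h1
      have hv1' : v.1 = 0 := by
        rcases mul_eq_zero.mp h1 with h | h
        · exact absurd h hgx
        · exact h
      exact Prod.ext hv1' h2
    · rw [codisjoint_iff, eq_top_iff]
      rintro v -
      refine Submodule.mem_sup.mpr ⟨(v.1 - L v / gx, v.2), ?_, (L v / gx, 0), ?_, ?_⟩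
      · rw [LinearMap.mem_ker]
        show L (v.1 - L v / gx, v.2) = 0
        rw [hLapp (v.1 - L v / gx, v.2), hLapp v]
        field_simp
        ring
      · rw [LinearMap.mem_ker]; rfl
      · have : v.1 - L v / gx + L v / gx = v.1 := by ring
        exact Prod.ext (by simpa using this) (by simp)
  let φ : ImplicitFunctionData ℝ (ℝ × ℝ) ℝ ℝ :=
    { leftFun := G
      leftDeriv := L
      rightFun := Prod.snd
      rightDeriv := ContinuousLinearMap.snd ℝ ℝ ℝ
      pt := (x, a)
      hasStrictFDerivAt_leftFun := hGs
      hasStrictFDerivAt_rightFun := hasStrictFDerivAt_snd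
      range_leftDeriv := hsurjL
      range_rightDeriv := hsurjS
      isCompl_ker := hker }
  set d : ℝ := -(ga / gx) with hddef
  let g'inv : ℝ →L[ℝ] ℝ × ℝ :=
    (d • ContinuousLinearMap.id ℝ ℝ).prod (ContinuousLinearMap.id ℝ ℝ)
  have hginv_apply : ∀ c : ℝ, g'inv c = (d * c, c) := fun c => rfl
  have hcond1 : (ContinuousLinearMap.snd ℝ ℝ ℝ).comp g'inv = ContinuousLinearMap.id ℝ ℝ := by
    refine ContinuousLinearMap.ext fun c => rfl
  have hcond2 : L.comp g'inv = 0 := by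
    refine ContinuousLinearMap.ext fun c => ?_
    show L (g'inv c) = 0
    rw [hginv_apply, hLapp]
    rw [hddef]
    field_simp
    ring
  have himp := φ.hasStrictFDerivAt_implicitFunction g'inv hcond1 hcond2
  have hGpt' : φ.leftFun φ.pt = 0 := hGpt
  rw [hGpt'] at himp
  -- himp : HasStrictFDerivAt (φ.implicitFunction 0) g'inv (φ.rightFun φ.pt)
  refine ⟨fun b => (φ.implicitFunction 0 b).1, ?_, ?_, ?_⟩
  · have hcomp := HasFDerivAt.comp a
      ((ContinuousLinearMap.fst ℝ ℝ ℝ).hasFDerivAt) himp.hasFDerivAt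
    have := hcomp.hasDerivAt
    have hval : ((ContinuousLinearMap.fst ℝ ℝ ℝ).comp g'inv) 1 = d := by
      rw [ContinuousLinearMap.comp_apply, hginv_apply]
      simp
    rw [hval] at this
    exact this
  · have h := φ.implicitFunction_apply_image.self_of_nhds
    rw [hGpt'] at h
    exact congrArg Prod.fst h
  · have h1 := φ.prodFun_implicitFunction
    have hpt : φ.prodFun φ.pt = (0, a) := by
      show (φ.leftFun φ.pt, φ.rightFun φ.pt) = (0, a)
      rw [hGpt']
    have h2 : Tendsto (fun b : ℝ => ((0:ℝ), b)) (𝓝 a) (𝓝 (φ.prodFun φ.pt)) := by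
      rw [hpt]
      exact tendsto_const_nhds.prodMk_nhds tendsto_id
    filter_upwards [h2.eventually h1] with b hb
    have hsnd : (φ.implicitFunction 0 b).2 = b := congrArg Prod.snd hb
    have hfst : G (φ.implicitFunction 0 b) = 0 := congrArg Prod.fst hb
    have hpair : φ.implicitFunction 0 b = ((φ.implicitFunction 0 b).1, b) :=
      Prod.ext rfl hsnd
    rw [hpair] at hfst
    exact ⟨hfst, rfl⟩

/-- For `a₀ < a ≤ 1`, at the unique zero `x₀(a) ∈ (-a/2, 0)` of `g(·,a)`, the
partial derivative `∂g/∂x = -f'(-x₀) - f'(x₀+a)` is negative, and `x₀` is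
differentiable with `dx₀/da < 0`, i.e. strictly decreasing. -/
theorem stmt17 (f f' f'' f''' : ℝ → ℝ)
    (hf' : ∀ x ∈ Icc (0 : ℝ) 1, HasDerivWithinAt f (f' x) (Icc 0 1) x)
    (hf'' : ∀ x ∈ Icc (0 : ℝ) 1, HasDerivWithinAt f' (f'' x) (Icc 0 1) x)
    (hf''' : ∀ x ∈ Icc (0 : ℝ) 1, HasDerivWithinAt f'' (f''' x) (Icc 0 1) x)
    (h0 : f 0 = 0) (h1 : f 1 = 0)
    (hpos : ∀ x ∈ Ioo (0 : ℝ) 1, 0 < f x)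
    (hconc : ∀ x ∈ Ioo (0 : ℝ) 1, f'' x < 0)
    (h3neg : ∀ x ∈ Ioo (0 : ℝ) 1, f''' x < 0)
    (hf'0 : 0 < f' 0)
    (a₀ : ℝ) (ha₀ : a₀ ∈ Ioo (0 : ℝ) 1) (ha₀' : f' a₀ = -f' 0)
    (g : ℝ → ℝ → ℝ) (hgdef : g = fun x a => f (-x) - f (x + a) + f a)
    (x₀ : ℝ → ℝ)
    (hx₀ : ∀ a ∈ Ioc a₀ 1, x₀ a ∈ Ioo (-a / 2) 0 ∧ g (x₀ a) a = 0 ∧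
      ∀ x ∈ Ioo (-a) (0 : ℝ), g x a = 0 → x = x₀ a) :
    ∀ a ∈ Ioc a₀ 1,
      (-f' (-(x₀ a)) - f' (x₀ a + a) < 0) ∧
      ∃ d : ℝ, HasDerivWithinAt x₀ d (Ioc a₀ 1) a ∧ d < 0 := by
  subst hgdef
  obtain ⟨ha01, ha02⟩ := ha₀
  intro a ha
  obtain ⟨haa, ha1⟩ := ha
  obtain ⟨⟨hx1, hx2⟩, hgz, huniq⟩ := hx₀ a ⟨haa, ha1⟩
  have hapos : 0 < a := ha01.trans haa
  set x := x₀ a with hxdef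
  -- strict antitonicity of f' and f''
  have hf'anti : StrictAntiOn f' (Icc (0:ℝ) 1) := by
    apply strictAntiOn_of_deriv_neg (convex_Icc 0 1)
      (fun t ht => (hf'' t ht).continuousWithinAt)
    intro t ht
    rw [interior_Icc] at ht
    rw [((hf'' t ⟨ht.1.le, ht.2.le⟩).hasDerivAt (Icc_mem_nhds ht.1 ht.2)).deriv]
    exact hconc t ht
  have hf''anti : StrictAntiOn f'' (Icc (0:ℝ) 1) := by
    apply strictAntiOn_of_deriv_neg (convex_Icc 0 1)
      (fun t ht => (hf''' t ht).continuousWithinAt)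
    intro t ht
    rw [interior_Icc] at ht
    rw [((hf''' t ⟨ht.1.le, ht.2.le⟩).hasDerivAt (Icc_mem_nhds ht.1 ht.2)).deriv]
    exact h3neg t ht
  -- the function h = g (·, a) and its derivative
  have hmap1 : ∀ y ∈ Icc x 0, -y ∈ Icc (0:ℝ) 1 :=
    fun y hy => ⟨by linarith [hy.2], by linarith [hy.1]⟩
  have hmap2 : ∀ y ∈ Icc x 0, y + a ∈ Icc (0:ℝ) 1 :=
    fun y hy => ⟨by linarith [hy.1], by linarith [hy.2]⟩
  have hh : ∀ y ∈ Icc x 0,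
      HasDerivWithinAt (fun z => f (-z) - f (z + a) + f a)
        (-f' (-y) - f' (y + a)) (Icc x 0) y := by
    intro y hy
    have t1 : HasDerivWithinAt (fun z : ℝ => f (-z)) (f' (-y) * (-1)) (Icc x 0) y :=
      HasDerivWithinAt.comp y (hf' (-y) (hmap1 y hy))
        ((hasDerivWithinAt_id y _).neg) (fun z hz => hmap1 z hz)
    have t2 : HasDerivWithinAt (fun z : ℝ => f (z + a)) (f' (y + a) * 1) (Icc x 0) y :=
      HasDerivWithinAt.comp y (hf' (y + a) (hmap2 y hy))
        ((hasDerivWithinAt_id y _).add_const a) (fun z hz => hmap2 z hz)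
    have h := (t1.sub t2).add_const (f a)
    exact h.congr_deriv (by ring)
  have hzero_h : f (-x) - f (x + a) + f a = 0 := hgz
  have hzero_0 : f (-(0:ℝ)) - f ((0:ℝ) + a) + f a = 0 := by
    rw [neg_zero, zero_add, h0]; ring
  obtain ⟨c, hcmem, hcslope⟩ :=
    exists_hasDerivAt_eq_slope (fun z => f (-z) - f (z + a) + f a)
      (fun y => -f' (-y) - f' (y + a)) hx2
      (fun y hy => (hh y hy).continuousWithinAt)
      (fun y hy => (hh y (Ioo_subset_Icc_self hy)).hasDerivAt (Icc_mem_nhds hy.1 hy.2))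
  have hc0 : -f' (-c) - f' (c + a) = 0 := by
    rw [hcslope]
    rw [show f (-(0:ℝ)) - f ((0:ℝ) + a) + f a = 0 from hzero_0,
      show f (-x) - f (x + a) + f a = 0 from hzero_h]
    simp
  -- strict monotonicity of h'
  have hh'mono : StrictMonoOn (fun y => -f' (-y) - f' (y + a)) (Icc x 0) := by
    apply strictMonoOn_of_deriv_pos (convex_Icc x 0)
    · intro y hy
      have t1 : HasDerivWithinAt (fun z : ℝ => f' (-z)) (f'' (-y) * (-1)) (Icc x 0) y :=
        HasDerivWithinAt.comp y (hf'' (-y) (hmap1 y hy))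
          ((hasDerivWithinAt_id y _).neg) (fun z hz => hmap1 z hz)
      have t2 : HasDerivWithinAt (fun z : ℝ => f' (z + a)) (f'' (y + a) * 1) (Icc x 0) y :=
        HasDerivWithinAt.comp y (hf'' (y + a) (hmap2 y hy))
          ((hasDerivWithinAt_id y _).add_const a) (fun z hz => hmap2 z hz)
      exact ((t1.neg).sub t2).continuousWithinAt
    · intro y hy
      rw [interior_Icc] at hy
      have hny : -y ∈ Ioo (0:ℝ) 1 := ⟨by linarith [hy.2], by linarith [hy.1]⟩
      have hya : y + a ∈ Ioo (0:ℝ) 1 := ⟨by linarith [hy.1], by linarith [hy.2]⟩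
      have t1 : HasDerivAt (fun z : ℝ => f' (-z)) (f'' (-y) * (-1)) y :=
        HasDerivAt.comp y
          ((hf'' (-y) (Ioo_subset_Icc_self hny)).hasDerivAt (Icc_mem_nhds hny.1 hny.2))
          ((hasDerivAt_id y).neg)
      have t2 : HasDerivAt (fun z : ℝ => f' (z + a)) (f'' (y + a) * 1) y :=
        HasDerivAt.comp y
          ((hf'' (y + a) (Ioo_subset_Icc_self hya)).hasDerivAt (Icc_mem_nhds hya.1 hya.2))
          ((hasDerivAt_id y).add_const a)
      have hd : HasDerivAt (fun y => -f' (-y) - f' (y + a))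
          (-(f'' (-y) * (-1)) - f'' (y + a) * 1) y := (t1.neg).sub t2
      rw [hd.deriv]
      have hlt := hf''anti (Ioo_subset_Icc_self hny) (Ioo_subset_Icc_self hya)
        (by linarith [hy.1] : -y < y + a)
      nlinarith
  have conj1 : -f' (-x) - f' (x + a) < 0 := by
    have h := hh'mono (⟨le_refl x, hx2.le⟩ : x ∈ Icc x 0)
      (Ioo_subset_Icc_self hcmem) hcmem.1
    simpa [hc0] using h
  refine ⟨conj1, ?_⟩
  -- Part 2: implicit function theorem
  have hga : f' a - f' (x + a) < 0 := by
    have h := hf'anti (⟨by linarith, by linarith⟩ : x + a ∈ Icc (0:ℝ) 1)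
      (⟨hapos.le, ha1⟩ : a ∈ Icc (0:ℝ) 1) (by linarith)
    linarith
  set gx : ℝ := -f' (-x) - f' (x + a) with hgxdef
  set ga : ℝ := f' a - f' (x + a) with hgadef
  have hgxne : gx ≠ 0 := ne_of_lt conj1
  -- the extended function and its derivative data
  have hmemnx : -x ∈ Ioo (0:ℝ) 2 := ⟨by linarith, by linarith⟩
  have hmemxa : x + a ∈ Ioo (0:ℝ) 2 := ⟨by linarith, by linarith⟩
  have hmema : a ∈ Ioo (0:ℝ) 2 := ⟨hapos, by linarith⟩
  have hFC1 := Fe_contDiffOn f f' f'' hf' hf''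
  have hGc : ContDiffAt ℝ 1 (fun p : ℝ × ℝ => Fe f f' (-p.1) - Fe f f' (p.1 + p.2) + Fe f f' p.2)
      (x, a) := by
    have c1 : ContDiffAt ℝ 1 (Fe f f') (-x) := hFC1.contDiffAt (Ioo_mem_nhds hmemnx.1 hmemnx.2)
    have c2 : ContDiffAt ℝ 1 (Fe f f') (x + a) := hFC1.contDiffAt (Ioo_mem_nhds hmemxa.1 hmemxa.2)
    have c3 : ContDiffAt ℝ 1 (Fe f f') a := hFC1.contDiffAt (Ioo_mem_nhds hmema.1 hmema.2)
    exact ((c1.comp (x, a) (contDiff_fst.neg.contDiffAt)).sub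
      (c2.comp (x, a) ((contDiff_fst.add contDiff_snd).contDiffAt))).add
      (c3.comp (x, a) contDiff_snd.contDiffAt)
  have hFd1 : Fde f' (-x) = f' (-x) := if_pos (by linarith)
  have hFd2 : Fde f' (x + a) = f' (x + a) := if_pos (by linarith)
  have hFd3 : Fde f' a = f' a := if_pos ha1
  have hLapp : ∀ p : ℝ × ℝ,
      (gx • ContinuousLinearMap.fst ℝ ℝ ℝ + ga • ContinuousLinearMap.snd ℝ ℝ ℝ) p
        = gx * p.1 + ga * p.2 := fun p => rfl
  have hLder : HasFDerivAt (fun p : ℝ × ℝ => Fe f f' (-p.1) - Fe f f' (p.1 + p.2) + Fe f f' p.2)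
      (gx • ContinuousLinearMap.fst ℝ ℝ ℝ + ga • ContinuousLinearMap.snd ℝ ℝ ℝ) (x, a) := by
    have t1 : HasFDerivAt (fun p : ℝ × ℝ => Fe f f' (-p.1))
        (Fde f' (-x) • (-(ContinuousLinearMap.fst ℝ ℝ ℝ))) (x, a) :=
      HasDerivAt.comp_hasFDerivAt (f := fun p : ℝ × ℝ => -p.1) (x, a)
        (Fe_hasDerivAt f f' hf' (-x) hmemnx)
        (ContinuousLinearMap.fst ℝ ℝ ℝ).hasFDerivAt.neg
    have t2 : HasFDerivAt (fun p : ℝ × ℝ => Fe f f' (p.1 + p.2))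
        (Fde f' (x + a) • (ContinuousLinearMap.fst ℝ ℝ ℝ + ContinuousLinearMap.snd ℝ ℝ ℝ)) (x, a) :=
      HasDerivAt.comp_hasFDerivAt (f := fun p : ℝ × ℝ => p.1 + p.2) (x, a)
        (Fe_hasDerivAt f f' hf' (x + a) hmemxa)
        ((ContinuousLinearMap.fst ℝ ℝ ℝ).hasFDerivAt.add (ContinuousLinearMap.snd ℝ ℝ ℝ).hasFDerivAt)
    have t3 : HasFDerivAt (fun p : ℝ × ℝ => Fe f f' p.2)
        (Fde f' a • ContinuousLinearMap.snd ℝ ℝ ℝ) (x, a) :=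
      HasDerivAt.comp_hasFDerivAt (f := fun p : ℝ × ℝ => p.2) (x, a)
        (Fe_hasDerivAt f f' hf' a hmema)
        (ContinuousLinearMap.snd ℝ ℝ ℝ).hasFDerivAt
    have h := (t1.sub t2).add t3
    refine h.congr_fderiv (ContinuousLinearMap.ext fun p => ?_)
    simp [hFd1, hFd2, hFd3, hgxdef, hgadef]
    ring
  have hGs : HasStrictFDerivAt
      (fun p : ℝ × ℝ => Fe f f' (-p.1) - Fe f f' (p.1 + p.2) + Fe f f' p.2)
      (gx • ContinuousLinearMap.fst ℝ ℝ ℝ + ga • ContinuousLinearMap.snd ℝ ℝ ℝ) (x, a) :=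
    hGc.hasStrictFDerivAt' hLder one_ne_zero
  have hGpt : (fun p : ℝ × ℝ => Fe f f' (-p.1) - Fe f f' (p.1 + p.2) + Fe f f' p.2) (x, a) = 0 := by
    show Fe f f' (-x) - Fe f f' (x + a) + Fe f f' a = 0
    rw [show Fe f f' (-x) = f (-x) from if_pos (by linarith),
      show Fe f f' (x + a) = f (x + a) from if_pos (by linarith),
      show Fe f f' a = f a from if_pos ha1]
    exact hgz
  obtain ⟨y, hyd, hya, hyev⟩ := implicit_key
    (fun p : ℝ × ℝ => Fe f f' (-p.1) - Fe f f' (p.1 + p.2) + Fe f f' p.2)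
    (gx • ContinuousLinearMap.fst ℝ ℝ ℝ + ga • ContinuousLinearMap.snd ℝ ℝ ℝ)
    x a gx ga hLapp hgxne hGs hGpt
  refine ⟨-(ga / gx), ?_, ?_⟩
  · -- x₀ agrees with y near a within Ioc a₀ 1
    have hcy : ContinuousAt y a := hyd.continuousAt
    have hev1 : ∀ᶠ b in 𝓝 a, y b < 0 := by
      have hmem : Iio (0:ℝ) ∈ 𝓝 (y a) := by rw [hya]; exact Iio_mem_nhds hx2
      exact hcy hmem
    have hev2 : ∀ᶠ b in 𝓝 a, 0 < y b + b := by
      have hc2 : ContinuousAt (fun b => y b + b) a := hcy.add continuousAt_id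
      have hmem : Ioi (0:ℝ) ∈ 𝓝 (y a + a) := by rw [hya]; exact Ioi_mem_nhds (by linarith)
      exact hc2 hmem
    have hevq : ∀ᶠ b in 𝓝[Ioc a₀ 1] a, x₀ b = y b := by
      filter_upwards [hyev.filter_mono nhdsWithin_le_nhds,
        hev1.filter_mono nhdsWithin_le_nhds, hev2.filter_mono nhdsWithin_le_nhds,
        self_mem_nhdsWithin] with b hb h1b h2b hbm
      obtain ⟨hbm1, hbm2⟩ := hbm
      have hbpos : 0 < b := ha01.trans hbm1
      have hGyb : Fe f f' (-(y b)) - Fe f f' (y b + b) + Fe f f' b = 0 := hb.1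
      have hgyb : f (-(y b)) - f (y b + b) + f b = 0 := by
        rw [show f (-(y b)) = Fe f f' (-(y b)) from (if_pos (by linarith)).symm,
          show f (y b + b) = Fe f f' (y b + b) from (if_pos (by linarith)).symm,
          show f b = Fe f f' b from (if_pos hbm2).symm]
        exact hGyb
      exact ((hx₀ b ⟨hbm1, hbm2⟩).2.2 (y b) ⟨by linarith, h1b⟩ hgyb).symm
    have hx0a : x₀ a = y a := hya.symm
    exact (hyd.hasDerivWithinAt).congr_of_eventuallyEq hevq hx0a
  · have hgalt : ga < 0 := hga
    have hgxlt : gx < 0 := conj1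
    have hpos : 0 < ga / gx := div_pos_of_neg_of_neg hgalt hgxlt
    linarith
end
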